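/- arXiv:math/0602009 — 4 statements merged into one kernel-verified Lean document; each statement's English description precedes it below -/
import Mathlib

section
/- Let X be a compact geodesic metric space and p ∈ X. If r > 0 satisfies 2r < sys(X,p), then every rectifiable loop whose image is contained in the open metric ball B(p,r) is nullhomotopic in X, i.e., path-homotopic rel endpoints to the constant loop at its basepoint. -/
/-- The length of a path in a pseudo-emetric space: its total variation. -/
noncomputable def pathLength {X : Type*} [PseudoEMetricSpace X] {x y : X} (γ : Path x y) :
    ENNReal :=
  eVariationOn γ Set.univ

/-- A metric space is geodesic if any two points are joined by a path whose
length equals the distance between them. -/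
def IsGeodesicSpace (X : Type*) [MetricSpace X] : Prop :=
  ∀ x y : X, ∃ γ : Path x y, pathLength γ = edist x y

/-- The systole of a metric space: the infimum of lengths of noncontractible loops. -/
noncomputable def systole (X : Type*) [MetricSpace X] : ENNReal :=
  sInf {L | ∃ (x : X) (γ : Path x x), ¬γ.Homotopic (Path.refl x) ∧ pathLength γ = L}

/-- The pointed systole at `p`: the infimum of lengths of noncontractible loops based at `p`. -/
noncomputable def pointedSystole (X : Type*) [MetricSpace X] (p : X) : ENNReal :=
  sInf {L | ∃ γ : Path p p, ¬γ.Homotopic (Path.refl p) ∧ pathLength γ = L}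


open unitInterval Set ENNReal

namespace SysAux

lemma univ_I : (univ : Set I) = Icc 0 1 := by
  ext t; simp only [mem_univ, mem_Icc, true_iff]
  exact ⟨t.2.1, t.2.2⟩

/-- affine map of I onto [a,b] -/
def am (a b : I) (hab : a ≤ b) : I → I := fun s =>
  ⟨a.1 + s.1 * (b.1 - a.1), by
    constructor
    · have := a.2.1; have := s.2.1; have h := sub_nonneg.2 (show a.1 ≤ b.1 from hab)
      nlinarith
    · have := s.2.2; have := b.2.2; have := s.2.1
      have h := sub_nonneg.2 (show a.1 ≤ b.1 from hab)
      nlinarith⟩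

lemma am_continuous (a b : I) (hab : a ≤ b) : Continuous (am a b hab) := by
  apply Continuous.subtype_mk
  fun_prop

@[simp] lemma am_zero (a b : I) (hab : a ≤ b) : am a b hab 0 = a := by
  apply Subtype.ext; simp [am]

@[simp] lemma am_one (a b : I) (hab : a ≤ b) : am a b hab 1 = b := by
  apply Subtype.ext; simp [am]

lemma am_monotone (a b : I) (hab : a ≤ b) : Monotone (am a b hab) := by
  intro s t hst
  show (am a b hab s).1 ≤ (am a b hab t).1
  have h := sub_nonneg.2 (show a.1 ≤ b.1 from hab)
  have : s.1 ≤ t.1 := hst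
  simp only [am]
  nlinarith

lemma am_image (a b : I) (hab : a ≤ b) : am a b hab '' univ = Icc a b := by
  apply Subset.antisymm
  · rintro _ ⟨s, -, rfl⟩
    constructor
    · show a.1 ≤ a.1 + s.1 * (b.1 - a.1)
      have h := sub_nonneg.2 (show a.1 ≤ b.1 from hab)
      nlinarith [s.2.1]
    · show a.1 + s.1 * (b.1 - a.1) ≤ b.1
      have h := sub_nonneg.2 (show a.1 ≤ b.1 from hab)
      nlinarith [s.2.2, s.2.1]
  · rintro c ⟨hac, hcb⟩
    rcases eq_or_lt_of_le (show a.1 ≤ b.1 from hab) with h | h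
    · refine ⟨0, mem_univ _, ?_⟩
      apply Subtype.ext
      have h1 : a.1 ≤ c.1 := hac
      have h2 : c.1 ≤ b.1 := hcb
      simp [am]; linarith
    · refine ⟨⟨(c.1 - a.1) / (b.1 - a.1), ?_, ?_⟩, mem_univ _, ?_⟩
      · apply div_nonneg (by linarith [show a.1 ≤ c.1 from hac]) (by linarith)
      · rw [div_le_one (by linarith)]; linarith [show c.1 ≤ b.1 from hcb]
      · apply Subtype.ext
        show a.1 + (c.1 - a.1) / (b.1 - a.1) * (b.1 - a.1) = c.1
        rw [div_mul_cancel₀]; · ring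
        · linarith

/-- restriction of a path to [a,b], as a path -/
def restr {X : Type*} [TopologicalSpace X] {x y : X} (γ : Path x y) (a b : I) (hab : a ≤ b) :
    Path (γ a) (γ b) where
  toFun := fun s => γ (am a b hab s)
  continuous_toFun := γ.continuous.comp (am_continuous a b hab)
  source' := by show γ (am a b hab 0) = γ a; rw [am_zero]
  target' := by show γ (am a b hab 1) = γ b; rw [am_one]

@[simp] lemma restr_apply {X : Type*} [TopologicalSpace X] {x y : X} (γ : Path x y) (a b : I)
    (hab : a ≤ b) (s : I) : restr γ a b hab s = γ (am a b hab s) := rfl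

variable {X : Type*} [PseudoEMetricSpace X]

lemma pathLength_restr {x y : X} (γ : Path x y) (a b : I) (hab : a ≤ b) :
    pathLength (restr γ a b hab) = eVariationOn γ (Icc a b) := by
  have : (restr γ a b hab : I → X) = (γ : I → X) ∘ am a b hab := rfl
  rw [pathLength, this, eVariationOn.comp_eq_of_monotoneOn _ _ ((am_monotone a b hab).monotoneOn _),
    am_image]

lemma homotopic_comp {X : Type*} [TopologicalSpace X] {x y u v : X} (γ : Path x y)
    (φ ψ : I → I) (hφ : Continuous φ) (hψ : Continuous ψ)
    (h0 : φ 0 = ψ 0) (h1 : φ 1 = ψ 1)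
    (pa pb : Path u v) (hpa : ∀ s, pa s = γ (φ s)) (hpb : ∀ s, pb s = γ (ψ s)) :
    pa.Homotopic pb := by
  have mem : ∀ q : I × I, (1 - q.1.1) * (φ q.2).1 + q.1.1 * (ψ q.2).1 ∈ I := by
    intro q
    have ht := q.1.2.1; have ht' := q.1.2.2
    have h1 := (φ q.2).2.1; have h2 := (φ q.2).2.2
    have h3 := (ψ q.2).2.1; have h4 := (ψ q.2).2.2
    constructor <;> nlinarith
  refine ⟨⟨⟨⟨fun q => γ ⟨(1 - q.1.1) * (φ q.2).1 + q.1.1 * (ψ q.2).1, mem q⟩, ?_⟩, ?_, ?_⟩, ?_⟩⟩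
  · apply γ.continuous.comp
    apply Continuous.subtype_mk
    have c1 : Continuous fun q : I × I => (φ q.2).1 :=
      continuous_subtype_val.comp (hφ.comp continuous_snd)
    have c2 : Continuous fun q : I × I => (ψ q.2).1 :=
      continuous_subtype_val.comp (hψ.comp continuous_snd)
    have c3 : Continuous fun q : I × I => q.1.1 :=
      continuous_subtype_val.comp continuous_fst
    continuity
  · intro s
    show γ _ = pa s
    rw [hpa]
    congr 1
    apply Subtype.ext
    show (1 - (0:I).1) * (φ s).1 + (0:I).1 * (ψ s).1 = (φ s).1
    norm_num
  · intro s
    show γ _ = pb s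
    rw [hpb]
    congr 1
    apply Subtype.ext
    show (1 - (1:I).1) * (φ s).1 + (1:I).1 * (ψ s).1 = (ψ s).1
    norm_num
  · intro t s hs
    rcases hs with h | h
    · subst h
      show γ _ = pa 0
      rw [hpa]
      congr 1
      apply Subtype.ext
      show (1 - t.1) * (φ 0).1 + t.1 * (ψ 0).1 = (φ 0).1
      rw [← h0]; ring
    · simp only [mem_singleton_iff] at h
      subst h
      show γ _ = pa 1
      rw [hpa]
      congr 1
      apply Subtype.ext
      show (1 - t.1) * (φ 1).1 + t.1 * (ψ 1).1 = (φ 1).1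
      rw [← h1]; ring



/-- doubling map clamped -/
def db1 (s : I) : I := ⟨min 1 (max 0 (2*s.1)), le_min zero_le_one (le_max_left _ _), min_le_left _ _⟩

def db2 (s : I) : I := ⟨min 1 (max 0 (2*s.1-1)), le_min zero_le_one (le_max_left _ _), min_le_left _ _⟩

lemma db1_continuous : Continuous db1 := by
  apply Continuous.subtype_mk; fun_prop

lemma db2_continuous : Continuous db2 := by
  apply Continuous.subtype_mk; fun_prop

lemma db1_eq (s : I) (h : s.1 ≤ 1/2) : db1 s = ⟨2*s.1, by constructor <;> linarith [s.2.1]⟩ := by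
  apply Subtype.ext
  show min 1 (max 0 (2*s.1)) = 2*s.1
  rw [max_eq_right (by linarith [s.2.1]), min_eq_right (by linarith)]

lemma db2_eq (s : I) (h : 1/2 ≤ s.1) : db2 s = ⟨2*s.1-1, by constructor <;> [linarith; linarith [s.2.2]]⟩ := by
  apply Subtype.ext
  show min 1 (max 0 (2*s.1-1)) = 2*s.1-1
  rw [max_eq_right (by linarith), min_eq_right (by linarith [s.2.2])]

noncomputable def half : I := ⟨1/2, by norm_num⟩

lemma restr_split {X : Type*} [TopologicalSpace X] {x y : X} (γ : Path x y) {a m b : I}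
    (ham : a ≤ m) (hmb : m ≤ b) :
    (restr γ a b (ham.trans hmb)).Homotopic ((restr γ a m ham).trans (restr γ m b hmb)) := by
  apply homotopic_comp γ (am a b (ham.trans hmb))
      (fun s => if s.1 ≤ 1/2 then am a m ham (db1 s) else am m b hmb (db2 s))
      (am_continuous _ _ _)
  · apply Continuous.if_le ((am_continuous _ _ _).comp db1_continuous)
      ((am_continuous _ _ _).comp db2_continuous) continuous_subtype_val continuous_const
    intro s hs
    show am a m ham (db1 s) = am m b hmb (db2 s)
    rw [db1_eq s (le_of_eq hs), db2_eq s (ge_of_eq hs)]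
    apply Subtype.ext
    show a.1 + (2*s.1) * (m.1 - a.1) = m.1 + (2*s.1-1) * (b.1 - m.1)
    rw [hs]; ring
  · show am a b _ 0 = _
    rw [am_zero]
    have : ((0:I)).1 ≤ 1/2 := by norm_num
    rw [if_pos this]
    have : db1 0 = 0 := by apply Subtype.ext; show min 1 (max 0 (2*(0:I).1)) = 0; norm_num
    rw [this, am_zero]
  · show am a b _ 1 = _
    rw [am_one]
    have h : ¬((1:I)).1 ≤ 1/2 := by norm_num
    rw [if_neg h]
    have : db2 1 = 1 := by apply Subtype.ext; show min 1 (max 0 (2*(1:I).1-1)) = 1; norm_num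
    rw [this, am_one]
  · intro s; rfl
  · intro s
    rw [Path.trans_apply]
    by_cases h : s.1 ≤ 1/2
    · rw [dif_pos h, if_pos h]
      show γ _ = γ _
      congr 1
      rw [db1_eq s h]
    · rw [dif_neg h, if_neg h]
      show γ _ = γ _
      congr 1
      rw [db2_eq s (by linarith [not_le.mp h])]

lemma restr_self {X : Type*} [TopologicalSpace X] {x y : X} (γ : Path x y) (a : I) :
    restr γ a a le_rfl = Path.refl (γ a) := by
  apply Path.ext
  funext s
  show γ (am a a le_rfl s) = γ a
  congr 1
  apply Subtype.ext
  show a.1 + s.1 * (a.1 - a.1) = a.1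
  ring

variable {Y : Type*} [PseudoEMetricSpace Y]

lemma eVariationOn_le_pathLength {x y : Y} (γ : Path x y) (s : Set I) :
    eVariationOn γ s ≤ pathLength γ :=
  eVariationOn.mono _ (subset_univ s)

lemma pathLength_symm {x y : Y} (γ : Path x y) : pathLength γ.symm = pathLength γ := by
  have h : (γ.symm : I → Y) = (γ : I → Y) ∘ unitInterval.symm := rfl
  have hanti : AntitoneOn unitInterval.symm univ := by
    intro s _ t _ hst
    show (1:ℝ) - t.1 ≤ 1 - s.1
    have : s.1 ≤ t.1 := hst
    linarith
  rw [pathLength, h, eVariationOn.comp_eq_of_antitoneOn _ _ hanti, image_univ,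
    Function.Surjective.range_eq (fun t => ⟨unitInterval.symm t, unitInterval.symm_symm t⟩)]
  rfl

lemma pathLength_trans {x y z : Y} (p : Path x y) (q : Path y z) :
    pathLength (p.trans q) = pathLength p + pathLength q := by
  have huniv : (univ : Set I) = Iic half ∪ Ici half := by
    ext t; simp only [mem_univ, mem_union, mem_Iic, mem_Ici, true_iff]
    exact le_total t half
  rw [pathLength, huniv, eVariationOn.union _ isGreatest_Iic isLeast_Ici]
  congr 1
  · have he : EqOn (⇑(p.trans q)) ((p : I → Y) ∘ db1) (Iic half) := by
      intro s hs
      have hs' : s.1 ≤ 1/2 := hs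
      rw [Path.trans_apply, dif_pos hs']
      show p _ = p (db1 s)
      rw [db1_eq s hs']
    have hmono : MonotoneOn db1 (Iic half) := by
      intro s _ t _ hst
      show (db1 s).1 ≤ (db1 t).1
      exact min_le_min le_rfl (max_le_max le_rfl (by
        have : s.1 ≤ t.1 := hst; linarith))
    have himg : db1 '' (Iic half) = univ := by
      refine Subset.antisymm (subset_univ _) ?_
      intro c _
      refine ⟨⟨c.1/2, by constructor <;> [linarith [c.2.1]; linarith [c.2.2]]⟩,
        show c.1/2 ≤ (1:ℝ)/2 by linarith [c.2.2], ?_⟩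
      apply Subtype.ext
      show min 1 (max 0 (2*(c.1/2))) = c.1
      rw [show 2*(c.1/2) = c.1 by ring, max_eq_right c.2.1, min_eq_right c.2.2]
    rw [eVariationOn.eq_of_eqOn he, eVariationOn.comp_eq_of_monotoneOn _ _ hmono, himg]
    rfl
  · have he : EqOn (⇑(p.trans q)) ((q : I → Y) ∘ db2) (Ici half) := by
      intro s hs
      have hs' : (1:ℝ)/2 ≤ s.1 := hs
      rw [Path.trans_apply]
      rcases eq_or_lt_of_le hs' with h | h
      · rw [dif_pos h.symm.le]
        have key : ∀ hh : 2*s.1 ∈ I, p ⟨2*s.1, hh⟩ = y := by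
          intro hh
          have h1 : (⟨2*s.1, hh⟩ : I) = 1 := Subtype.ext (by show 2*s.1 = 1; rw [← h]; norm_num)
          rw [h1]; exact p.target
        show p _ = q (db2 s)
        rw [key _]
        have h2 : db2 s = 0 := by
          apply Subtype.ext; show min 1 (max 0 (2*s.1-1)) = 0
          rw [← h]; norm_num
        rw [h2]; exact q.source.symm
      · rw [dif_neg (by linarith)]
        show q _ = q (db2 s)
        rw [db2_eq s hs']
    have hmono : MonotoneOn db2 (Ici half) := by
      intro s _ t _ hst
      show (db2 s).1 ≤ (db2 t).1
      exact min_le_min le_rfl (max_le_max le_rfl (by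
        have : s.1 ≤ t.1 := hst; linarith))
    have himg : db2 '' (Ici half) = univ := by
      refine Subset.antisymm (subset_univ _) ?_
      intro c _
      refine ⟨⟨(c.1+1)/2, by constructor <;> [linarith [c.2.1]; linarith [c.2.2]]⟩,
        show (1:ℝ)/2 ≤ (c.1+1)/2 by linarith [c.2.1], ?_⟩
      apply Subtype.ext
      show min 1 (max 0 (2*((c.1+1)/2)-1)) = c.1
      rw [show 2*((c.1+1)/2)-1 = c.1 by ring, max_eq_right c.2.1, min_eq_right c.2.2]
    rw [eVariationOn.eq_of_eqOn he, eVariationOn.comp_eq_of_monotoneOn _ _ hmono, himg]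
    rfl


section Partition

variable {Y : Type*} [PseudoEMetricSpace Y]

lemma edist_le_sum_chain (f : I → Y) (t : ℕ → I) {a b : ℕ} (hab : a ≤ b) :
    edist (f (t b)) (f (t a)) ≤ ∑ j ∈ Finset.Ico a b, edist (f (t (j+1))) (f (t j)) := by
  induction b, hab using Nat.le_induction with
  | base => simp
  | succ b hab ih =>
    rw [Finset.sum_Ico_succ_top (by omega : a ≤ b)]
    calc edist (f (t (b+1))) (f (t a))
        ≤ edist (f (t (b+1))) (f (t b)) + edist (f (t b)) (f (t a)) := edist_triangle _ _ _
      _ ≤ _ := by rw [add_comm]; exact add_le_add ih le_rfl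

lemma sum_chain_mono (f : I → Y) (t : ℕ → I) (ρ : ℕ → ℕ) (hρ : Monotone ρ) (n : ℕ) :
    ∑ i ∈ Finset.range n, edist (f (t (ρ (i+1)))) (f (t (ρ i))) ≤
      ∑ j ∈ Finset.Ico (ρ 0) (ρ n), edist (f (t (j+1))) (f (t j)) := by
  induction n with
  | zero => simp
  | succ n ih =>
    rw [Finset.sum_range_succ,
      ← Finset.sum_Ico_consecutive _ (hρ (Nat.zero_le n)) (hρ (Nat.le_succ n))]
    exact add_le_add ih (edist_le_sum_chain f t (hρ (Nat.le_succ n)))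

lemma sum_pieces (f : I → Y) (t : ℕ → I) (ht : Monotone t) (N : ℕ) :
    ∑ i ∈ Finset.range N, eVariationOn f (Icc (t i) (t (i+1)))
      = eVariationOn f (Icc (t 0) (t N)) := by
  induction N with
  | zero =>
    simp only [Finset.range_zero, Finset.sum_empty, Icc_self]
    exact (eVariationOn.subsingleton f (subsingleton_singleton)).symm
  | succ N ih =>
    rw [Finset.sum_range_succ, ih]
    have h := eVariationOn.Icc_add_Icc f (s := univ) (ht (Nat.zero_le N)) (ht (Nat.le_succ N))
      (mem_univ _)
    simpa [univ_inter] using h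

lemma piece_bound {ι : Type*} (s : Finset ι) (V e : ι → ℝ≥0∞) (c : ℝ≥0∞)
    (he : ∀ i ∈ s, e i ≤ V i) (hfin : ∑ i ∈ s, V i ≠ ⊤)
    (hsum : ∑ i ∈ s, V i ≤ ∑ i ∈ s, e i + c) {i : ι} (hi : i ∈ s) : V i ≤ e i + c := by
  classical
  have h1 : V i + ∑ j ∈ s.erase i, e j ≤ ∑ j ∈ s, V j := by
    rw [← Finset.add_sum_erase _ _ hi]
    exact add_le_add le_rfl (Finset.sum_le_sum fun j hj => he j (Finset.mem_of_mem_erase hj))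
  have h2 : ∑ j ∈ s, e j = e i + ∑ j ∈ s.erase i, e j := (Finset.add_sum_erase _ _ hi).symm
  have h3 : V i + ∑ j ∈ s.erase i, e j ≤ (e i + c) + ∑ j ∈ s.erase i, e j := by
    calc V i + ∑ j ∈ s.erase i, e j ≤ ∑ j ∈ s, V j := h1
      _ ≤ ∑ j ∈ s, e j + c := hsum
      _ = (e i + c) + ∑ j ∈ s.erase i, e j := by rw [h2]; ring
  have hne : ∑ j ∈ s.erase i, e j ≠ ⊤ := by
    refine ne_top_of_le_ne_top hfin ?_
    calc ∑ j ∈ s.erase i, e j ≤ ∑ j ∈ s.erase i, V j :=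
          Finset.sum_le_sum fun j hj => he j (Finset.mem_of_mem_erase hj)
      _ ≤ ∑ j ∈ s, V j := Finset.sum_le_sum_of_subset (Finset.erase_subset _ _)
  exact (ENNReal.add_le_add_iff_right hne).mp h3

lemma exists_grid_between {m : ℕ} (hm : 0 < m) (a b : I) (hgap : 1/(m:ℝ) < b.1 - a.1) :
    ∃ k : ℕ, k ≤ m ∧ a.1 < (k:ℝ)/m ∧ (k:ℝ)/m < b.1 := by
  have hmR : (0:ℝ) < m := by exact_mod_cast hm
  have hfl : ((⌊a.1*m⌋.toNat : ℕ) : ℝ) = ((⌊a.1*m⌋ : ℤ) : ℝ) := by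
    exact_mod_cast Int.toNat_of_nonneg (Int.floor_nonneg.mpr (mul_nonneg a.2.1 hmR.le))
  have h1 : ((⌊a.1*m⌋ : ℤ) : ℝ) ≤ a.1*m := Int.floor_le _
  have h2 : a.1*m < ((⌊a.1*m⌋ : ℤ) : ℝ) + 1 := Int.lt_floor_add_one _
  have h3 : 1 < (b.1 - a.1)*m := (div_lt_iff₀ hmR).mp hgap
  have h4 : (b.1 - a.1)*m = b.1*m - a.1*m := by ring
  have h5 : b.1*m ≤ m := by nlinarith [b.2.2]
  refine ⟨⌊a.1*m⌋.toNat + 1, ?_, ?_, ?_⟩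
  · have : ((⌊a.1*m⌋.toNat + 1 : ℕ) : ℝ) ≤ m := by push_cast; rw [hfl]; linarith
    exact_mod_cast this
  · rw [lt_div_iff₀ hmR]
    push_cast
    rw [hfl]
    linarith
  · rw [div_lt_iff₀ hmR]
    push_cast
    rw [hfl]
    linarith

lemma exists_fine_partition (f : I → Y) (hf : Continuous f)
    (hV : eVariationOn f univ ≠ ⊤) {ε : ℝ≥0∞} (hε : 0 < ε) :
    ∃ (N : ℕ) (t : ℕ → I), Monotone t ∧ t 0 = 0 ∧ t N = 1 ∧
      ∀ i < N, eVariationOn f (Icc (t i) (t (i+1))) ≤ ε := by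
  classical
  rcases eq_or_ne ε ⊤ with rfl | hεtop
  · refine ⟨1, fun i => if i = 0 then 0 else 1, ?_, by simp, by simp, fun i _ => le_top⟩
    intro i j hij
    by_cases hi : i = 0 <;> by_cases hj : j = 0
    · simp [hi, hj]
    · simp only [hi, hj, if_true, if_false]
      exact unitInterval.nonneg'
    · omega
    · simp [hi, hj]
  have hhalf : (0:ℝ≥0∞) < ε/2 := ENNReal.half_pos hε.ne'
  obtain ⟨δ, hδ0, hδ⟩ := EMetric.uniformContinuous_iff.mp
    (CompactSpace.uniformContinuous_of_continuous hf) (ε/2) hhalf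
  obtain ⟨m, hm⟩ := ENNReal.exists_inv_nat_lt hδ0.ne'
  have hm0 : 0 < m := by
    rcases Nat.eq_zero_or_pos m with h | h
    · exfalso; subst h; simp at hm
    · exact h
  have hmR : (0:ℝ) < m := by exact_mod_cast hm0
  set gp : ℕ → I := fun k => ⟨min 1 ((k:ℝ)/m), le_min zero_le_one (by positivity),
    min_le_left _ _⟩ with hgp
  -- near-optimal partition
  have hexists : ∃ (n : ℕ) (u : ℕ → I), Monotone u ∧
      eVariationOn f univ ≤ (∑ i ∈ Finset.range n, edist (f (u (i+1))) (f (u i))) + ε/2 := by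
    by_cases hV0 : eVariationOn f univ ≤ ε/2
    · exact ⟨0, fun _ => 0, monotone_const, by simpa using hV0⟩
    · have hVne : eVariationOn f univ ≠ 0 := fun h => hV0 (by rw [h]; exact zero_le)
      have hlt : eVariationOn f univ - ε/2 < eVariationOn f univ :=
        ENNReal.sub_lt_self hV hVne hhalf.ne'
      conv at hlt => rw [eVariationOn]
      obtain ⟨⟨n, u, hu, hmem⟩, hsum⟩ := lt_iSup_iff.mp hlt
      exact ⟨n, u, hu, tsub_le_iff_right.mp hsum.le⟩
  obtain ⟨n, u, hu, husum⟩ := hexists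
  set T : Finset I := (Finset.range (n+1)).image u ∪ (Finset.range (m+1)).image gp with hT
  set L : List I := T.sort (· ≤ ·) with hL
  have hLsorted : L.SortedLT := T.sortedLT_sort
  have hstrict : StrictMono L.get := hLsorted.strictMono_get
  have hgp_mem : ∀ k ≤ m, gp k ∈ L := fun k hk => (Finset.mem_sort _).mpr
    (Finset.mem_union_right _ (Finset.mem_image_of_mem _ (Finset.mem_range.mpr (by omega))))
  have hu_mem : ∀ i ≤ n, u i ∈ L := fun i hk => (Finset.mem_sort _).mpr
    (Finset.mem_union_left _ (Finset.mem_image_of_mem _ (Finset.mem_range.mpr (by omega))))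
  have hgp0 : gp 0 = 0 := by
    apply Subtype.ext
    show min 1 (((0:ℕ):ℝ)/m) = 0
    norm_num
  have hgpm : gp m = 1 := by
    apply Subtype.ext
    show min 1 ((m:ℝ)/m) = 1
    rw [div_self hmR.ne', min_self]
  have hLne : L ≠ [] := fun h => by
    have := hgp_mem 0 (Nat.zero_le m); rw [h] at this; exact List.not_mem_nil this
  have hlenpos : 0 < L.length := List.length_pos_iff.mpr hLne
  set N := L.length - 1 with hN
  have hNlen : N + 1 = L.length := Nat.succ_pred_eq_of_pos hlenpos
  set t : ℕ → I := fun i => if h : i < L.length then L.get ⟨i, h⟩ else 1 with ht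
  have htdef : ∀ i (h : i < L.length), t i = L.get ⟨i, h⟩ := fun i h => dif_pos h
  have htmono : Monotone t := by
    intro i j hij
    by_cases hi : i < L.length <;> by_cases hj : j < L.length
    · rw [htdef i hi, htdef j hj]
      exact hstrict.monotone (show (⟨i,hi⟩ : Fin _) ≤ ⟨j,hj⟩ from hij)
    · rw [htdef i hi]
      have : t j = 1 := dif_neg hj
      rw [this]
      exact unitInterval.le_one'
    · exact absurd (lt_of_le_of_lt hij hj) hi
    · have h1 : t i = 1 := dif_neg hi
      have h2 : t j = 1 := dif_neg hj
      rw [h1, h2]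
  have ht0 : t 0 = 0 := by
    rw [htdef 0 hlenpos]
    refine le_antisymm ?_ unitInterval.nonneg'
    have h0mem : (0:I) ∈ L := hgp0 ▸ hgp_mem 0 (Nat.zero_le m)
    obtain ⟨j, hj⟩ := List.mem_iff_get.mp h0mem
    rw [← hj]
    exact hstrict.monotone (Fin.mk_le_mk.mpr (Nat.zero_le _))
  have htN : t N = 1 := by
    rw [htdef N (by omega)]
    refine le_antisymm unitInterval.le_one' ?_
    have h1mem : (1:I) ∈ L := hgpm ▸ hgp_mem m le_rfl
    obtain ⟨j, hj⟩ := List.mem_iff_get.mp h1mem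
    rw [← hj]
    exact hstrict.monotone (Fin.mk_le_mk.mpr (by omega))
  have hmesh : ∀ i, i < N → edist (t i) (t (i+1)) < δ := by
    intro i hi
    have hi1 : i < L.length := by omega
    have hi2 : i + 1 < L.length := by omega
    have hgap : (t (i+1)).1 - (t i).1 ≤ 1/(m:ℝ) := by
      by_contra hgt
      push_neg at hgt
      obtain ⟨k, hkm, hk1, hk2⟩ := exists_grid_between hm0 (t i) (t (i+1)) hgt
      have hgpk : (gp k).1 = (k:ℝ)/m := by
        show min 1 ((k:ℝ)/m) = (k:ℝ)/m
        rw [min_eq_right]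
        rw [div_le_one hmR]
        exact_mod_cast hkm
      obtain ⟨j, hj⟩ := List.mem_iff_get.mp (hgp_mem k hkm)
      have hlt1 : t i < gp k := by
        rw [← Subtype.coe_lt_coe, hgpk]; exact hk1
      have hlt2 : gp k < t (i+1) := by
        rw [← Subtype.coe_lt_coe, hgpk]; exact hk2
      rw [htdef i hi1, ← hj] at hlt1
      rw [htdef (i+1) hi2, ← hj] at hlt2
      have hij1 : (⟨i, hi1⟩ : Fin L.length) < j := hstrict.lt_iff_lt.mp hlt1
      have hij2 : j < (⟨i+1, hi2⟩ : Fin L.length) := hstrict.lt_iff_lt.mp hlt2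
      have hij1' : i < (j : ℕ) := hij1
      have hij2' : (j : ℕ) < i+1 := hij2
      omega
    have hle : edist (t i) (t (i+1)) ≤ ((m:ℕ):ℝ≥0∞)⁻¹ := by
      rw [edist_dist]
      have hmono := htmono (Nat.le_succ i)
      have hd : dist (t i) (t (i+1)) ≤ 1/(m:ℝ) := by
        rw [Subtype.dist_eq, Real.dist_eq, abs_le]
        constructor
        · have : (t i).1 ≤ (t (i+1)).1 := hmono
          linarith [hgap]
        · have : (t i).1 ≤ (t (i+1)).1 := hmono
          linarith [hgap]
      calc ENNReal.ofReal (dist (t i) (t (i+1))) ≤ ENNReal.ofReal (1/(m:ℝ)) :=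
            ENNReal.ofReal_le_ofReal hd
        _ = ((m:ℕ):ℝ≥0∞)⁻¹ := by
            rw [one_div, ENNReal.ofReal_inv_of_pos hmR, ENNReal.ofReal_natCast]
    exact lt_of_le_of_lt hle hm
  -- index map
  set ρ : ℕ → ℕ := fun i => L.idxOf (u (min i n)) with hρ
  have hρlt : ∀ i, ρ i < L.length := fun i =>
    List.idxOf_lt_length_iff.mpr (hu_mem _ (min_le_right _ _))
  have htρ : ∀ i, t (ρ i) = u (min i n) := fun i => by
    rw [htdef _ (hρlt i)]; exact List.idxOf_get _
  have hρmono : Monotone ρ := by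
    intro i j hij
    have h1 : u (min i n) ≤ u (min j n) := hu (min_le_min_right n hij)
    by_contra hcon
    push_neg at hcon
    have h2 : (⟨ρ j, hρlt j⟩ : Fin L.length) < ⟨ρ i, hρlt i⟩ := Fin.mk_lt_mk.mpr hcon
    have h3 := hstrict h2
    rw [show L.get ⟨ρ j, hρlt j⟩ = t (ρ j) from (htdef _ _).symm,
      show L.get ⟨ρ i, hρlt i⟩ = t (ρ i) from (htdef _ _).symm, htρ, htρ] at h3
    exact absurd h3 (not_lt.mpr h1)
  have hsum1 : ∑ i ∈ Finset.range n, edist (f (u (i+1))) (f (u i)) ≤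
      ∑ j ∈ Finset.range N, edist (f (t (j+1))) (f (t j)) := by
    have e1 : ∀ i ∈ Finset.range n, edist (f (u (i+1))) (f (u i)) =
        edist (f (t (ρ (i+1)))) (f (t (ρ i))) := by
      intro i hi
      have hin : i < n := Finset.mem_range.mp hi
      rw [htρ, htρ, min_eq_left (by omega), min_eq_left (by omega)]
    rw [Finset.sum_congr rfl e1]
    calc ∑ i ∈ Finset.range n, edist (f (t (ρ (i+1)))) (f (t (ρ i)))
        ≤ ∑ j ∈ Finset.Ico (ρ 0) (ρ n), edist (f (t (j+1))) (f (t j)) :=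
          sum_chain_mono f t ρ hρmono n
      _ ≤ ∑ j ∈ Finset.range N, edist (f (t (j+1))) (f (t j)) := by
          apply Finset.sum_le_sum_of_subset
          intro j hj
          rw [Finset.mem_Ico] at hj
          rw [Finset.mem_range]
          have := hρlt n
          omega
  refine ⟨N, t, htmono, ht0, htN, ?_⟩
  intro i hi
  have hVsum : ∑ j ∈ Finset.range N, eVariationOn f (Icc (t j) (t (j+1)))
      = eVariationOn f univ := by
    rw [sum_pieces f t htmono N, ht0, htN, ← univ_I]
  have hEd : ∀ j ∈ Finset.range N, edist (f (t (j+1))) (f (t j)) ≤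
      eVariationOn f (Icc (t j) (t (j+1))) := fun j hj =>
    eVariationOn.edist_le f ⟨htmono (Nat.le_succ j), le_rfl⟩ ⟨le_rfl, htmono (Nat.le_succ j)⟩
  have hsumtot : ∑ j ∈ Finset.range N, eVariationOn f (Icc (t j) (t (j+1))) ≤
      (∑ j ∈ Finset.range N, edist (f (t (j+1))) (f (t j))) + ε/2 := by
    rw [hVsum]
    exact husum.trans (add_le_add_left hsum1 _)
  have hVi := piece_bound (Finset.range N) _ _ (ε/2) hEd (by rw [hVsum]; exact hV) hsumtot
    (Finset.mem_range.mpr hi)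
  have hei : edist (f (t (i+1))) (f (t i)) ≤ ε/2 := by
    have h := hδ (a := t (i+1)) (b := t i) (by rw [edist_comm]; exact hmesh i hi)
    exact h.le
  calc eVariationOn f (Icc (t i) (t (i+1))) ≤ edist (f (t (i+1))) (f (t i)) + ε/2 := hVi
    _ ≤ ε/2 + ε/2 := add_le_add_left hei _
    _ = ε := ENNReal.add_halves ε

end Partition


section Algebra

variable {Z : Type*} [TopologicalSpace Z]

lemma homotopic_of_loop {p a b : Z} (g₁ : Path p a) (g₂ : Path p b) (pa : Path a b)
    (h : (g₁.trans (pa.trans g₂.symm)).Homotopic (Path.refl p)) :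
    pa.Homotopic (g₁.symm.trans g₂) := by
  have h1 : ((g₁.trans pa).trans g₂.symm).Homotopic (Path.refl p) :=
    Path.Homotopic.trans ⟨Path.Homotopy.transAssoc g₁ pa g₂.symm⟩ h
  have h2 : (g₁.trans pa).Homotopic g₂ := by
    have s1 : (g₁.trans pa).Homotopic ((g₁.trans pa).trans (Path.refl b)) :=
      Path.Homotopic.symm ⟨Path.Homotopy.transRefl _⟩
    have s2 : ((g₁.trans pa).trans (Path.refl b)).Homotopic
        ((g₁.trans pa).trans (g₂.symm.trans g₂)) :=
      Path.Homotopic.hcomp (Path.Homotopic.refl _) ⟨Path.Homotopy.reflSymmTrans g₂⟩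
    have s3 : ((g₁.trans pa).trans (g₂.symm.trans g₂)).Homotopic
        (((g₁.trans pa).trans g₂.symm).trans g₂) :=
      Path.Homotopic.symm ⟨Path.Homotopy.transAssoc _ _ _⟩
    have s4 : (((g₁.trans pa).trans g₂.symm).trans g₂).Homotopic ((Path.refl p).trans g₂) :=
      Path.Homotopic.hcomp h1 (Path.Homotopic.refl _)
    have s5 : ((Path.refl p).trans g₂).Homotopic g₂ := ⟨Path.Homotopy.reflTrans g₂⟩
    exact (((s1.trans s2).trans s3).trans s4).trans s5
  have s6 : pa.Homotopic ((Path.refl a).trans pa) :=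
    Path.Homotopic.symm ⟨Path.Homotopy.reflTrans pa⟩
  have s7 : ((Path.refl a).trans pa).Homotopic ((g₁.symm.trans g₁).trans pa) :=
    Path.Homotopic.hcomp ⟨Path.Homotopy.reflSymmTrans g₁⟩ (Path.Homotopic.refl _)
  have s8 : ((g₁.symm.trans g₁).trans pa).Homotopic (g₁.symm.trans (g₁.trans pa)) :=
    ⟨Path.Homotopy.transAssoc _ _ _⟩
  have s9 : (g₁.symm.trans (g₁.trans pa)).Homotopic (g₁.symm.trans g₂) :=
    Path.Homotopic.hcomp (Path.Homotopic.refl _) h2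
  exact ((s6.trans s7).trans s8).trans s9

lemma homotopic_step {p x1 x2 x3 : Z} (g₁ : Path p x1) (g₂ : Path p x2) (g₃ : Path p x3)
    {pa : Path x1 x2} {pb : Path x2 x3}
    (h1 : pa.Homotopic (g₁.symm.trans g₂)) (h2 : pb.Homotopic (g₂.symm.trans g₃)) :
    (pa.trans pb).Homotopic (g₁.symm.trans g₃) := by
  have s1 : (pa.trans pb).Homotopic ((g₁.symm.trans g₂).trans (g₂.symm.trans g₃)) :=
    Path.Homotopic.hcomp h1 h2
  have s2 : ((g₁.symm.trans g₂).trans (g₂.symm.trans g₃)).Homotopic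
      (g₁.symm.trans (g₂.trans (g₂.symm.trans g₃))) := ⟨Path.Homotopy.transAssoc _ _ _⟩
  have i1 : (g₂.trans (g₂.symm.trans g₃)).Homotopic g₃ := by
    have a1 : (g₂.trans (g₂.symm.trans g₃)).Homotopic ((g₂.trans g₂.symm).trans g₃) :=
      Path.Homotopic.symm ⟨Path.Homotopy.transAssoc _ _ _⟩
    have a2 : ((g₂.trans g₂.symm).trans g₃).Homotopic ((Path.refl p).trans g₃) :=
      Path.Homotopic.hcomp (Path.Homotopic.symm ⟨Path.Homotopy.reflTransSymm g₂⟩)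
        (Path.Homotopic.refl _)
    have a3 : ((Path.refl p).trans g₃).Homotopic g₃ := ⟨Path.Homotopy.reflTrans g₃⟩
    exact (a1.trans a2).trans a3
  have s3 : (g₁.symm.trans (g₂.trans (g₂.symm.trans g₃))).Homotopic (g₁.symm.trans g₃) :=
    Path.Homotopic.hcomp (Path.Homotopic.refl _) i1
  exact (s1.trans s2).trans s3

lemma final_cast {x p z₀ z₁ : Z} (γ : Path x x) (G : ∀ q : Z, Path p q)
    (hz₀ : z₀ = x) (hz₁ : z₁ = x) (τ : Path z₀ z₁) (hτγ : ∀ s, τ s = γ s)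
    (h : τ.Homotopic ((G z₀).symm.trans (G z₁))) : γ.Homotopic (Path.refl x) := by
  subst hz₀
  subst hz₁
  have hτ : τ = γ := Path.ext (funext hτγ)
  subst hτ
  exact h.trans (Path.Homotopic.symm ⟨Path.Homotopy.reflSymmTrans (G _)⟩)

end Algebra

end SysAux

/-- In a compact geodesic metric space, if `2r < sys(X,p)`, then every
rectifiable loop whose image is contained in the open ball `B(p,r)` is nullhomotopic
(path-homotopic rel endpoints to the constant loop at its basepoint). -/
theorem loop_in_small_ball_nullhomotopic {X : Type*} [MetricSpace X] [CompactSpace X]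
    (hgeo : IsGeodesicSpace X) (p : X) (r : ℝ) (hr : 0 < r)
    (hsys : ENNReal.ofReal (2 * r) < pointedSystole X p)
    (x : X) (γ : Path x x) (hrect : pathLength γ ≠ ⊤)
    (him : ∀ t, γ t ∈ Metric.ball p r) :
    γ.Homotopic (Path.refl x) := by
  classical
  choose G hG using fun q => hgeo p q
  obtain ⟨ε, hε0, hεtop, hεlt⟩ : ∃ ε : ℝ≥0∞, 0 < ε ∧ ε ≠ ⊤ ∧
      ENNReal.ofReal (2 * r) + ε < pointedSystole X p := by
    rcases eq_or_ne (pointedSystole X p) ⊤ with htop | hne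
    · refine ⟨1, one_pos, ENNReal.one_ne_top, ?_⟩
      rw [htop]
      exact ENNReal.add_lt_top.mpr ⟨ENNReal.ofReal_lt_top, ENNReal.one_lt_top⟩
    · set d := pointedSystole X p - ENNReal.ofReal (2 * r) with hd
      have hd0 : 0 < d := tsub_pos_of_lt hsys
      have hdtop : d ≠ ⊤ := ne_top_of_le_ne_top hne tsub_le_self
      refine ⟨d / 2, ENNReal.half_pos hd0.ne', ?_, ?_⟩
      · exact (ENNReal.div_lt_top hdtop (by norm_num)).ne
      · have h1 : d / 2 < d := ENNReal.half_lt_self hd0.ne' hdtop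
        have h2 : ENNReal.ofReal (2 * r) + d = pointedSystole X p := by
          rw [hd, add_tsub_cancel_of_le hsys.le]
        calc ENNReal.ofReal (2 * r) + d / 2 < ENNReal.ofReal (2 * r) + d :=
              ENNReal.add_lt_add_left ENNReal.ofReal_ne_top h1
          _ = _ := h2
  have SP : ∀ (a b : X) (pa : Path a b), a ∈ Metric.ball p r → b ∈ Metric.ball p r →
      pathLength pa ≤ ε → pa.Homotopic ((G a).symm.trans (G b)) := by
    intro a b pa ha hb hlen
    have h1 : edist p a < ENNReal.ofReal r := by
      rw [edist_dist, dist_comm]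
      exact (ENNReal.ofReal_lt_ofReal_iff hr).mpr (Metric.mem_ball.mp ha)
    have h2 : edist p b < ENNReal.ofReal r := by
      rw [edist_dist, dist_comm]
      exact (ENNReal.ofReal_lt_ofReal_iff hr).mpr (Metric.mem_ball.mp hb)
    have hlenℓ : pathLength ((G a).trans (pa.trans (G b).symm)) < pointedSystole X p := by
      rw [SysAux.pathLength_trans, SysAux.pathLength_trans, SysAux.pathLength_symm, hG, hG]
      calc edist p a + (pathLength pa + edist p b)
          ≤ edist p a + (ε + edist p b) := by
            exact add_le_add_right (add_le_add_left hlen _) _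
        _ < ENNReal.ofReal r + (ε + ENNReal.ofReal r) :=
            ENNReal.add_lt_add h1 (ENNReal.add_lt_add_left hεtop h2)
        _ = ENNReal.ofReal r + ENNReal.ofReal r + ε := by ring
        _ = ENNReal.ofReal (2 * r) + ε := by
            rw [← ENNReal.ofReal_add hr.le hr.le, show r + r = 2 * r from by ring]
        _ < pointedSystole X p := hεlt
    have hcontr : ((G a).trans (pa.trans (G b).symm)).Homotopic (Path.refl p) := by
      by_contra hnc
      have hle : pointedSystole X p ≤ pathLength ((G a).trans (pa.trans (G b).symm)) :=
        sInf_le ⟨_, hnc, rfl⟩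
      exact absurd (lt_of_le_of_lt hle hlenℓ) (lt_irrefl _)
    exact SysAux.homotopic_of_loop (G a) (G b) pa hcontr
  obtain ⟨N, t, htm, ht0, htN, hpieces⟩ :=
    SysAux.exists_fine_partition (⇑γ) γ.continuous hrect hε0
  have main : ∀ k, k ≤ N → (SysAux.restr γ (t 0) (t k) (htm (Nat.zero_le k))).Homotopic
      ((G (γ (t 0))).symm.trans (G (γ (t k)))) := by
    intro k
    induction k with
    | zero =>
      intro _
      rw [SysAux.restr_self]
      exact ⟨Path.Homotopy.reflSymmTrans _⟩
    | succ k ih =>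
      intro hk1
      have ihh := ih (by omega)
      have hsplit := SysAux.restr_split γ (htm (Nat.zero_le k)) (htm (Nat.le_succ k))
      have hpiece : (SysAux.restr γ (t k) (t (k+1)) (htm (Nat.le_succ k))).Homotopic
          ((G (γ (t k))).symm.trans (G (γ (t (k+1))))) := by
        apply SP
        · exact him (t k)
        · exact him (t (k+1))
        · rw [SysAux.pathLength_restr]
          exact hpieces k (by omega)
      exact hsplit.trans (SysAux.homotopic_step _ _ _ ihh hpiece)
  have key := main N le_rfl
  refine SysAux.final_cast γ G ?_ ?_ _ ?_ key
  · rw [ht0]; exact γ.source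
  · rw [htN]; exact γ.target
  · intro s
    show γ (SysAux.am (t 0) (t N) _ s) = γ s
    congr 1
    apply Subtype.ext
    show (t 0).1 + s.1 * ((t N).1 - (t 0).1) = s.1
    rw [ht0, htN]
    show (0:ℝ) + s.1 * (1 - 0) = s.1
    ring
end

section
/- Let X be a compact geodesic metric space and p ∈ X with 0 < sys(X,p) < ∞. Let γ be a pointed systolic loop at p, i.e., a noncontractible loop based at p of length L = sys(X,p). Suppose s ∈ [0,1] is such that the restriction of γ to [0,s] has length L/2 (hence the restriction of γ to [s,1] also has length L/2), and set q = γ(s). Then dist(p,q) = L/2; that is, γ is formed of two distance-minimizing arcs of length L/2 starting at p and ending at the common point q. -/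
section Aux

lemma aux_Icc_zero_one_eq_univ : (Set.Icc (0:unitInterval) 1) = Set.univ := by
  ext t; simp [Set.mem_Icc, unitInterval.nonneg', unitInterval.le_one']

lemma aux_pathLength_symm {X : Type*} [PseudoEMetricSpace X] {x y : X} (γ : Path x y) :
    pathLength γ.symm = pathLength γ := by
  have h : AntitoneOn unitInterval.symm (Set.univ : Set unitInterval) := by
    intro a _ b _ hab
    simp only [unitInterval.symm, Subtype.mk_le_mk]
    have : (a:ℝ) ≤ b := hab
    linarith
  have := eVariationOn.comp_eq_of_antitoneOn (γ : unitInterval → X) unitInterval.symm h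
  have himg : unitInterval.symm '' (Set.univ : Set unitInterval) = Set.univ := by
    rw [Set.image_univ]
    exact (unitInterval.symm_involutive.surjective).range_eq
  have hco : (γ.symm : unitInterval → X) = (γ : unitInterval → X) ∘ unitInterval.symm := rfl
  rw [pathLength, pathLength, hco, this, himg]

lemma aux_pathLength_trans_le {X : Type*} [PseudoEMetricSpace X] {x y z : X}
    (a : Path x y) (b : Path y z) :
    pathLength (a.trans b) ≤ pathLength a + pathLength b := by
  set half : unitInterval := ⟨1/2, by norm_num, by norm_num⟩ with hhalf
  have h0h : (0:unitInterval) ≤ half := unitInterval.nonneg'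
  have hh1 : half ≤ (1:unitInterval) := unitInterval.le_one'
  have hsplit := eVariationOn.Icc_add_Icc (a.trans b : unitInterval → X)
      (s := (Set.univ : Set unitInterval)) h0h hh1 (Set.mem_univ _)
  simp only [Set.univ_inter, aux_Icc_zero_one_eq_univ] at hsplit
  rw [pathLength, ← hsplit]
  have hmono : ∀ c : ℝ, MonotoneOn
      (fun t : unitInterval => Set.projIcc (0:ℝ) 1 zero_le_one (2*(t:ℝ)+c))
      (Set.univ : Set unitInterval) := by
    intro c u _ v _ huv
    have : (u:ℝ) ≤ v := huv
    exact Set.monotone_projIcc zero_le_one (by linarith)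
  have h1 : eVariationOn (a.trans b : unitInterval → X) (Set.Icc 0 half) ≤ pathLength a := by
    have heq : Set.EqOn (a.trans b : unitInterval → X)
        ((a : unitInterval → X) ∘
          (fun t : unitInterval => Set.projIcc (0:ℝ) 1 zero_le_one (2*(t:ℝ)+0)))
        (Set.Icc 0 half) := by
      intro t ht
      have ht' : (t:ℝ) ≤ 1/2 := ht.2
      show (if ((t:ℝ)) ≤ 1/2 then a.extend (2*(t:ℝ)) else b.extend (2*(t:ℝ)-1)) = _
      rw [if_pos ht']
      show a (Set.projIcc (0:ℝ) 1 zero_le_one (2*(t:ℝ))) = _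
      norm_num
    rw [eVariationOn.eq_of_eqOn heq]
    exact eVariationOn.comp_le_of_monotoneOn _ _ ((hmono 0).mono (Set.subset_univ _))
      (fun t _ => Set.mem_univ _)
  have h2 : eVariationOn (a.trans b : unitInterval → X) (Set.Icc half 1) ≤ pathLength b := by
    have heq : Set.EqOn (a.trans b : unitInterval → X)
        ((b : unitInterval → X) ∘
          (fun t : unitInterval => Set.projIcc (0:ℝ) 1 zero_le_one (2*(t:ℝ)+(-1))))
        (Set.Icc half 1) := by
      intro t ht
      have ht' : (1:ℝ)/2 ≤ (t:ℝ) := ht.1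
      show (if ((t:ℝ)) ≤ 1/2 then a.extend (2*(t:ℝ)) else b.extend (2*(t:ℝ)-1)) = _
      by_cases h : (t:ℝ) ≤ 1/2
      · have ht2 : 2*(t:ℝ) = 1 := by linarith
        rw [if_pos h]
        rw [ht2, Path.extend_one]
        show _ = b (Set.projIcc (0:ℝ) 1 zero_le_one (2*(t:ℝ)+(-1)))
        rw [show 2*(t:ℝ)+(-1) = 0 by linarith]
        rw [Set.projIcc_left]
        exact b.source.symm
      · rw [if_neg h]
        show b (Set.projIcc (0:ℝ) 1 zero_le_one (2*(t:ℝ)-1)) = _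
        congr 2
    rw [eVariationOn.eq_of_eqOn heq]
    exact eVariationOn.comp_le_of_monotoneOn _ _ ((hmono (-1)).mono (Set.subset_univ _))
      (fun t _ => Set.mem_univ _)
  exact add_le_add h1 h2

variable {X : Type*} [TopologicalSpace X] {x y : X}

/-- The restriction of `γ` to `[0,s]`, as a path from `x` to `γ s`. -/
def auxFirstPart (γ : Path x y) (s : unitInterval) : Path x (γ s) where
  toFun t := γ ⟨(s:ℝ)*(t:ℝ), unitInterval.mul_mem s.2 t.2⟩
  continuous_toFun := γ.continuous.comp
    (((continuous_const.mul continuous_subtype_val).subtype_mk _))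
  source' := by
    show γ ⟨(s:ℝ)*((0:unitInterval):ℝ), unitInterval.mul_mem s.2 (0:unitInterval).2⟩ = x
    have : (⟨(s:ℝ)*((0:unitInterval):ℝ), unitInterval.mul_mem s.2 (0:unitInterval).2⟩
        : unitInterval) = 0 := by ext; simp
    rw [this, γ.source]
  target' := by
    show γ ⟨(s:ℝ)*((1:unitInterval):ℝ), unitInterval.mul_mem s.2 (1:unitInterval).2⟩ = γ s
    have : (⟨(s:ℝ)*((1:unitInterval):ℝ), unitInterval.mul_mem s.2 (1:unitInterval).2⟩
        : unitInterval) = s := by ext; simp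
    rw [this]

lemma aux_secondPart_mem (s t : unitInterval) : (s:ℝ) + (t:ℝ)*(1-(s:ℝ)) ∈ unitInterval := by
  constructor
  · nlinarith [s.2.1, s.2.2, t.2.1, t.2.2]
  · nlinarith [s.2.1, s.2.2, t.2.1, t.2.2]

/-- The restriction of `γ` to `[s,1]`, as a path from `γ s` to `y`. -/
def auxSecondPart (γ : Path x y) (s : unitInterval) : Path (γ s) y where
  toFun t := γ ⟨(s:ℝ) + (t:ℝ)*(1-(s:ℝ)), aux_secondPart_mem s t⟩
  continuous_toFun := γ.continuous.comp
    (((continuous_const.add (continuous_subtype_val.mul continuous_const)).subtype_mk _))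
  source' := by
    show γ ⟨(s:ℝ) + ((0:unitInterval):ℝ)*(1-(s:ℝ)), aux_secondPart_mem s 0⟩ = γ s
    have : (⟨(s:ℝ) + ((0:unitInterval):ℝ)*(1-(s:ℝ)), aux_secondPart_mem s 0⟩
        : unitInterval) = s := by ext; simp
    rw [this]
  target' := by
    show γ ⟨(s:ℝ) + ((1:unitInterval):ℝ)*(1-(s:ℝ)), aux_secondPart_mem s 1⟩ = y
    have : (⟨(s:ℝ) + ((1:unitInterval):ℝ)*(1-(s:ℝ)), aux_secondPart_mem s 1⟩
        : unitInterval) = 1 := by ext; simp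
    rw [this, γ.target]

end Aux

section Aux2

variable {X : Type*} [PseudoEMetricSpace X] {x y : X}

lemma aux_firstPart_length (γ : Path x y) (s : unitInterval) :
    pathLength (auxFirstPart γ s) ≤ eVariationOn γ (Set.Icc 0 s) := by
  have hmono : MonotoneOn
      (fun t : unitInterval => (⟨(s:ℝ)*(t:ℝ), unitInterval.mul_mem s.2 t.2⟩ : unitInterval))
      (Set.univ : Set unitInterval) := by
    intro u _ v _ huv
    have h1 : (u:ℝ) ≤ v := huv
    show ((s:ℝ)*(u:ℝ)) ≤ (s:ℝ)*(v:ℝ)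
    nlinarith [s.2.1]
  have hmaps : Set.MapsTo
      (fun t : unitInterval => (⟨(s:ℝ)*(t:ℝ), unitInterval.mul_mem s.2 t.2⟩ : unitInterval))
      (Set.univ : Set unitInterval) (Set.Icc 0 s) := by
    intro t _
    constructor
    · exact unitInterval.nonneg'
    · show ((s:ℝ)*(t:ℝ)) ≤ (s:ℝ)
      nlinarith [s.2.1, t.2.1, t.2.2]
  exact eVariationOn.comp_le_of_monotoneOn _ _ hmono hmaps

lemma aux_secondPart_length (γ : Path x y) (s : unitInterval) :
    pathLength (auxSecondPart γ s) ≤ eVariationOn γ (Set.Icc s 1) := by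
  have hmono : MonotoneOn
      (fun t : unitInterval =>
        (⟨(s:ℝ) + (t:ℝ)*(1-(s:ℝ)), aux_secondPart_mem s t⟩ : unitInterval))
      (Set.univ : Set unitInterval) := by
    intro u _ v _ huv
    have h1 : (u:ℝ) ≤ v := huv
    show (s:ℝ) + (u:ℝ)*(1-(s:ℝ)) ≤ (s:ℝ) + (v:ℝ)*(1-(s:ℝ))
    nlinarith [s.2.2]
  have hmaps : Set.MapsTo
      (fun t : unitInterval =>
        (⟨(s:ℝ) + (t:ℝ)*(1-(s:ℝ)), aux_secondPart_mem s t⟩ : unitInterval))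
      (Set.univ : Set unitInterval) (Set.Icc s 1) := by
    intro t _
    constructor
    · show (s:ℝ) ≤ (s:ℝ) + (t:ℝ)*(1-(s:ℝ))
      nlinarith [s.2.2, t.2.1]
    · exact unitInterval.le_one'
  exact eVariationOn.comp_le_of_monotoneOn _ _ hmono hmaps

end Aux2

section Aux3

variable {X : Type*} [TopologicalSpace X] {x y : X}

/-- The reparametrization used to split a path at time `s`. -/
noncomputable def auxReparamFun (s : unitInterval) (t : unitInterval) : unitInterval :=
  ⟨if (t:ℝ) ≤ 1/2 then (s:ℝ)*(2*(t:ℝ)) else (s:ℝ) + (2*(t:ℝ)-1)*(1-(s:ℝ)), by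
    constructor
    · split_ifs with h
      · nlinarith [s.2.1, t.2.1]
      · nlinarith [s.2.1, s.2.2, t.2.1, t.2.2]
    · split_ifs with h
      · nlinarith [s.2.1, s.2.2, t.2.1]
      · nlinarith [s.2.1, s.2.2, t.2.2]⟩

lemma auxReparamFun_continuous (s : unitInterval) : Continuous (auxReparamFun s) := by
  apply Continuous.subtype_mk
  exact Continuous.if_le
    (continuous_const.mul (continuous_const.mul continuous_subtype_val))
    (continuous_const.add ((continuous_const.mul continuous_subtype_val |>.sub
      continuous_const).mul continuous_const))
    continuous_subtype_val continuous_const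
    (fun t ht => by rw [ht]; ring)

lemma auxReparamFun_zero (s : unitInterval) : auxReparamFun s 0 = 0 := by
  ext
  show (if ((0:unitInterval):ℝ) ≤ 1/2 then _ else _) = ((0:unitInterval):ℝ)
  norm_num

lemma auxReparamFun_one (s : unitInterval) : auxReparamFun s 1 = 1 := by
  ext
  show (if ((1:unitInterval):ℝ) ≤ 1/2 then (s:ℝ)*(2*((1:unitInterval):ℝ))
      else (s:ℝ) + (2*((1:unitInterval):ℝ)-1)*(1-(s:ℝ))) = ((1:unitInterval):ℝ)
  rw [if_neg (by norm_num)]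
  norm_num

lemma aux_split_eq (γ : Path x y) (s : unitInterval) :
    (auxFirstPart γ s).trans (auxSecondPart γ s) =
      γ.reparam (auxReparamFun s) (auxReparamFun_continuous s)
        (auxReparamFun_zero s) (auxReparamFun_one s) := by
  ext t
  show (if ((t:ℝ)) ≤ 1/2 then (auxFirstPart γ s).extend (2*(t:ℝ))
      else (auxSecondPart γ s).extend (2*(t:ℝ)-1)) = γ (auxReparamFun s t)
  by_cases h : (t:ℝ) ≤ 1/2
  · rw [if_pos h,
      Path.extend_apply (auxFirstPart γ s) ⟨by linarith [t.2.1], by linarith⟩]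
    show γ _ = γ _
    congr 1
    ext
    show (s:ℝ) * (2*(t:ℝ)) = _
    rw [show ((auxReparamFun s t : unitInterval) : ℝ)
        = if (t:ℝ) ≤ 1/2 then (s:ℝ)*(2*(t:ℝ)) else (s:ℝ) + (2*(t:ℝ)-1)*(1-(s:ℝ)) from rfl,
      if_pos h]
  · rw [if_neg h,
      Path.extend_apply (auxSecondPart γ s) ⟨by linarith [not_le.1 h], by linarith [t.2.2]⟩]
    show γ _ = γ _
    congr 1
    ext
    show (s:ℝ) + (2*(t:ℝ)-1)*(1-(s:ℝ)) = _
    rw [show ((auxReparamFun s t : unitInterval) : ℝ)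
        = if (t:ℝ) ≤ 1/2 then (s:ℝ)*(2*(t:ℝ)) else (s:ℝ) + (2*(t:ℝ)-1)*(1-(s:ℝ)) from rfl,
      if_neg h]

lemma aux_split_homotopic (γ : Path x y) (s : unitInterval) :
    γ.Homotopic ((auxFirstPart γ s).trans (auxSecondPart γ s)) := by
  rw [aux_split_eq]
  exact ⟨Path.Homotopy.reparam γ (auxReparamFun s) (auxReparamFun_continuous s)
    (auxReparamFun_zero s) (auxReparamFun_one s)⟩

end Aux3

/-- A pointed systolic loop at `p` is formed of two distance-minimizing
arcs of length `L/2` starting at `p` and ending at a common midpoint `q`: if the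
restriction of `γ` to `[0,s]` has length `L/2`, then `dist(p, γ s) = L/2`. -/
theorem pointed_systolic_loop_two_minimizing_arcs {X : Type*} [MetricSpace X] [CompactSpace X]
    (hgeo : IsGeodesicSpace X) (p : X)
    (hpos : 0 < pointedSystole X p) (hfin : pointedSystole X p ≠ ⊤)
    (γ : Path p p) (hnc : ¬γ.Homotopic (Path.refl p))
    (hlen : pathLength γ = pointedSystole X p)
    (s : unitInterval) (hs : eVariationOn γ (Set.Icc 0 s) = pathLength γ / 2) :
    edist p (γ s) = pathLength γ / 2 := by
  have hLfin : pathLength γ ≠ ⊤ := by rw [hlen]; exact hfin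
  have hhalf_fin : pathLength γ / 2 ≠ ⊤ :=
    ne_top_of_le_ne_top hLfin ENNReal.half_le_self
  -- upper bound
  have hle : edist p (γ s) ≤ pathLength γ / 2 := by
    have h0 : (0:unitInterval) ∈ Set.Icc (0:unitInterval) s :=
      ⟨le_refl _, unitInterval.nonneg'⟩
    have hsmem : s ∈ Set.Icc (0:unitInterval) s := ⟨unitInterval.nonneg', le_refl _⟩
    have := eVariationOn.edist_le (γ : unitInterval → X) h0 hsmem
    rw [γ.source, hs] at this
    exact this
  refine le_antisymm hle ?_
  by_contra hlt
  push_neg at hlt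
  -- variation of the second half
  have hIcc2 : eVariationOn (γ : unitInterval → X) (Set.Icc s 1) = pathLength γ / 2 := by
    have hadd := eVariationOn.Icc_add_Icc (γ : unitInterval → X)
        (s := (Set.univ : Set unitInterval)) (unitInterval.nonneg' : (0:unitInterval) ≤ s)
        (unitInterval.le_one') (Set.mem_univ s)
    simp only [Set.univ_inter, aux_Icc_zero_one_eq_univ] at hadd
    rw [hs] at hadd
    have h2 : pathLength γ / 2 + eVariationOn (γ : unitInterval → X) (Set.Icc s 1)
        = pathLength γ / 2 + pathLength γ / 2 := by
      rw [hadd, ENNReal.add_halves]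
      rfl
    exact (ENNReal.add_right_inj hhalf_fin).mp h2
  -- the geodesic
  obtain ⟨σ, hσ⟩ := hgeo p (γ s)
  -- the two loops
  set a := auxFirstPart γ s with ha
  set b := auxSecondPart γ s with hb
  have hla : pathLength a ≤ pathLength γ / 2 := by
    rw [ha]; exact (aux_firstPart_length γ s).trans (le_of_eq hs)
  have hlb : pathLength b ≤ pathLength γ / 2 := by
    rw [hb]; exact (aux_secondPart_length γ s).trans (le_of_eq hIcc2)
  have hcontr : ∀ α : Path p p, pathLength α < pointedSystole X p →
      α.Homotopic (Path.refl p) := by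
    intro α h
    by_contra hn
    have hmem : pathLength α ∈
        {L | ∃ δ : Path p p, ¬δ.Homotopic (Path.refl p) ∧ pathLength δ = L} := ⟨α, hn, rfl⟩
    exact absurd (sInf_le hmem) (not_le.mpr h)
  have hασ : pathLength (a.trans σ.symm) < pointedSystole X p := by
    calc pathLength (a.trans σ.symm) ≤ pathLength a + pathLength σ.symm :=
          aux_pathLength_trans_le a σ.symm
      _ = pathLength a + edist p (γ s) := by rw [aux_pathLength_symm, hσ]
      _ ≤ pathLength γ / 2 + edist p (γ s) := add_le_add_left hla _
      _ < pathLength γ / 2 + pathLength γ / 2 :=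
          ENNReal.add_lt_add_left hhalf_fin hlt
      _ = pathLength γ := ENNReal.add_halves _
      _ = pointedSystole X p := hlen
  have hβσ : pathLength (σ.trans b) < pointedSystole X p := by
    calc pathLength (σ.trans b) ≤ pathLength σ + pathLength b :=
          aux_pathLength_trans_le σ b
      _ = edist p (γ s) + pathLength b := by rw [hσ]
      _ ≤ edist p (γ s) + pathLength γ / 2 := add_le_add_right hlb _
      _ < pathLength γ / 2 + pathLength γ / 2 := by
          exact ENNReal.add_lt_add_right hhalf_fin hlt
      _ = pathLength γ := ENNReal.add_halves _
      _ = pointedSystole X p := hlen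
  have hα : (a.trans σ.symm).Homotopic (Path.refl p) := hcontr _ hασ
  have hβ : (σ.trans b).Homotopic (Path.refl p) := hcontr _ hβσ
  -- a is homotopic to σ
  have h_ac : a.Homotopic σ := by
    have k0' : (a.trans (Path.refl (γ s))).Homotopic a := ⟨Path.Homotopy.transRefl a⟩
    have k0 : a.Homotopic (a.trans (Path.refl (γ s))) := k0'.symm
    have k1 : (a.trans (Path.refl (γ s))).Homotopic (a.trans (σ.symm.trans σ)) :=
      Path.Homotopic.hcomp (Path.Homotopic.refl a)
        ⟨Path.Homotopy.reflSymmTrans σ⟩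
    have k2' : ((a.trans σ.symm).trans σ).Homotopic (a.trans (σ.symm.trans σ)) :=
      ⟨Path.Homotopy.transAssoc a σ.symm σ⟩
    have k2 : (a.trans (σ.symm.trans σ)).Homotopic ((a.trans σ.symm).trans σ) := k2'.symm
    have k3 : ((a.trans σ.symm).trans σ).Homotopic ((Path.refl p).trans σ) :=
      Path.Homotopic.hcomp hα (Path.Homotopic.refl σ)
    have k4 : ((Path.refl p).trans σ).Homotopic σ := ⟨Path.Homotopy.reflTrans σ⟩
    exact ((k0.trans k1).trans k2).trans (k3.trans k4)
  have hfinal : γ.Homotopic (Path.refl p) := by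
    have h1 : γ.Homotopic (a.trans b) := aux_split_homotopic γ s
    have h2 : (a.trans b).Homotopic (σ.trans b) :=
      Path.Homotopic.hcomp h_ac (Path.Homotopic.refl b)
    exact (h1.trans h2).trans hβ
  exact hnc hfinal
end

section
/- Let X be a compact geodesic metric space with systole normalized to the value 2, i.e., sys(X) = 2. Let C ⊆ X be a subset containing the image of some rectifiable noncontractible loop of X. Then for every positive integer n, the set C admits a (1/n)-separated subset containing at least n+1 elements, i.e., there exist n+1 points of C whose pairwise distances are all at least 1/n. -/
open Set unitInterval
open scoped ENNReal NNReal

namespace SysAux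

section General

variable {X : Type*} [PseudoEMetricSpace X]

theorem projIcc_image_univ : (projIcc (0:ℝ) 1 zero_le_one) '' (Icc (0:ℝ) 1) = (univ : Set I) := by
  ext t
  simp only [mem_image, mem_univ, iff_true]
  exact ⟨(t : ℝ), t.2, by simp⟩

theorem pathLength_eq_extend {a b : X} (p : Path a b) :
    pathLength p = eVariationOn p.extend (Set.Icc (0:ℝ) 1) := by
  have h : p.extend = ⇑p ∘ (Set.projIcc (0:ℝ) 1 zero_le_one) := rfl
  have key := eVariationOn.comp_eq_of_monotoneOn (f := ⇑p)
    (φ := Set.projIcc (0:ℝ) 1 zero_le_one)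
    ((monotone_projIcc zero_le_one).monotoneOn (Icc (0:ℝ) 1))
  rw [projIcc_image_univ] at key
  rw [pathLength, h]
  exact key.symm

theorem pathLength_symm_s12 {a b : X} (p : Path a b) : pathLength p.symm = pathLength p := by
  have h : ⇑p.symm = ⇑p ∘ unitInterval.symm := rfl
  have hanti : AntitoneOn (unitInterval.symm) (univ : Set I) := by
    intro s _ t _ hst
    rw [← Subtype.coe_le_coe]
    simp only [unitInterval.coe_symm_eq]
    have := Subtype.coe_le_coe.2 hst
    linarith
  have key := eVariationOn.comp_eq_of_antitoneOn (f := ⇑p) (φ := unitInterval.symm) hanti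
  have himg : unitInterval.symm '' (univ : Set I) = univ := by
    ext t
    simp only [mem_image, mem_univ, iff_true]
    exact ⟨unitInterval.symm t, trivial, unitInterval.symm_symm t⟩
  rw [himg] at key
  rw [pathLength, h, key, pathLength]



end General

section Metric

variable {X : Type*} [MetricSpace X]

theorem pathLength_trans_s12 {a b c : X} (p : Path a b) (q : Path b c) :
    pathLength (p.trans q) = pathLength p + pathLength q := by
  rw [pathLength_eq_extend, pathLength_eq_extend p, pathLength_eq_extend q]
  have key := eVariationOn.Icc_add_Icc (f := (p.trans q).extend) (s := (univ : Set ℝ))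
    (by norm_num : (0:ℝ) ≤ 1/2) (by norm_num : (1/2:ℝ) ≤ 1) (mem_univ _)
  simp only [univ_inter] at key
  rw [← key]
  have piece1 : eVariationOn (p.trans q).extend (Icc 0 (1/2:ℝ))
      = eVariationOn p.extend (Icc (0:ℝ) 1) := by
    have heq : EqOn (p.trans q).extend (p.extend ∘ (fun t : ℝ => 2 * t)) (Icc 0 (1/2:ℝ)) := by
      intro t ht
      have ht1 : t ∈ Icc (0:ℝ) 1 := ⟨ht.1, ht.2.trans (by norm_num)⟩
      have h2t : 2*t ∈ Icc (0:ℝ) 1 := ⟨by linarith [ht.1], by linarith [ht.2]⟩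
      simp only [Function.comp_apply]
      rw [Path.extend_apply _ ht1, Path.extend_apply _ h2t, Path.trans_apply]
      rw [dif_pos ht.2]
    rw [eVariationOn.eq_of_eqOn heq,
      eVariationOn.comp_eq_of_monotoneOn (f := p.extend) (φ := fun t : ℝ => 2 * t)
        (fun s _ t _ hst => by dsimp; linarith)]
    norm_num [image_mul_left_Icc' (two_pos (α := ℝ))]
  have piece2 : eVariationOn (p.trans q).extend (Icc (1/2:ℝ) 1)
      = eVariationOn q.extend (Icc (0:ℝ) 1) := by
    have heq : EqOn (p.trans q).extend (q.extend ∘ (fun t : ℝ => 2 * t - 1)) (Icc (1/2:ℝ) 1) := by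
      intro t ht
      have ht1 : t ∈ Icc (0:ℝ) 1 := ⟨le_trans (by norm_num) ht.1, ht.2⟩
      have h2t : 2*t - 1 ∈ Icc (0:ℝ) 1 := ⟨by linarith [ht.1], by linarith [ht.2]⟩
      simp only [Function.comp_apply]
      rw [Path.extend_apply _ ht1, Path.extend_apply _ h2t, Path.trans_apply]
      split_ifs with hc
      · have h12 : t = 1/2 := le_antisymm hc ht.1
        subst h12
        have gen : ∀ (h1 : 2*(1/2:ℝ) ∈ unitInterval) (h2 : 2*(1/2:ℝ)-1 ∈ unitInterval),
            p ⟨2*(1/2:ℝ), h1⟩ = q ⟨2*(1/2:ℝ)-1, h2⟩ := by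
          intro h1 h2
          have e1 : (⟨2*(1/2:ℝ), h1⟩ : I) = 1 := Subtype.ext (by norm_num)
          have e2 : (⟨2*(1/2:ℝ)-1, h2⟩ : I) = 0 := Subtype.ext (by norm_num)
          rw [e1, e2, Path.target, Path.source]
        exact gen _ _
      · rfl
    rw [eVariationOn.eq_of_eqOn heq,
      eVariationOn.comp_eq_of_monotoneOn (f := q.extend) (φ := fun t : ℝ => 2 * t - 1)
        (fun s _ t _ hst => by dsimp; linarith)]
    have himg : (fun t : ℝ => 2 * t - 1) '' Icc (1/2) 1 = Icc (0:ℝ) 1 := by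
      have h := image_affine_Icc' (two_pos (α := ℝ)) (-1 : ℝ) (1/2) 1
      norm_num [sub_eq_add_neg] at h ⊢
    rw [himg]
  rw [piece1, piece2]


theorem homotopic_of_comp {Y : Type*} [TopologicalSpace Y] {g : ℝ → Y} (hg : Continuous g)
    {u v : I → ℝ} (hu : Continuous u) (hv : Continuous v)
    (h0 : u 0 = v 0) (h1 : u 1 = v 1) {a b : Y} (p q : Path a b)
    (hp : ∀ t, p t = g (u t)) (hq : ∀ t, q t = g (v t)) : p.Homotopic q := by
  refine ⟨⟨⟨fun st => g ((1 - (st.1 : ℝ)) * u st.2 + (st.1 : ℝ) * v st.2), ?_⟩, ?_, ?_⟩, ?_⟩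
  · fun_prop
  · intro t
    simp [hp t]
  · intro t
    simp [hq t]
  · intro s t ht
    rcases ht with h | h
    · subst h
      simp only [ContinuousMap.coe_mk]
      rw [← h0]
      have : (1 - (s:ℝ)) * u 0 + (s:ℝ) * u 0 = u 0 := by ring
      rw [this, ← hp 0]
      simp [Path.source]
    · simp only [mem_singleton_iff] at h
      subst h
      simp only [ContinuousMap.coe_mk]
      rw [← h1]
      have : (1 - (s:ℝ)) * u 1 + (s:ℝ) * u 1 = u 1 := by ring
      rw [this, ← hp 1]
      simp [Path.target]


def subPath {Y : Type*} [TopologicalSpace Y] {g : ℝ → Y} (hg : Continuous g) (a b : ℝ) :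
    Path (g a) (g b) where
  toFun := fun t => g ((b - a) * t + a)
  continuous_toFun := by fun_prop
  source' := by simp
  target' := by norm_num

theorem subPath_split {g : ℝ → X} (hg : Continuous g) (a b c : ℝ) :
    (subPath hg a c).Homotopic ((subPath hg a b).trans (subPath hg b c)) := by
  apply homotopic_of_comp hg (u := fun t : I => (c - a) * t + a)
    (v := fun t : I => if (t:ℝ) ≤ 1/2 then (b-a)*(2*t)+a else (c-b)*(2*t-1)+b)
  · fun_prop
  · apply Continuous.if_le
    · fun_prop
    · fun_prop
    · exact continuous_subtype_val
    · exact continuous_const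
    · intro t ht
      rw [ht]; ring
  · norm_num
  · norm_num
  · intro t; rfl
  · intro t
    rw [Path.trans_apply]
    split_ifs with h
    · rfl
    · rfl

theorem pathLength_subPath {g : ℝ → X} (hg : Continuous g) {a b : ℝ} (hab : a ≤ b) :
    pathLength (subPath hg a b) = eVariationOn g (Icc a b) := by
  have h : ⇑(subPath hg a b) = g ∘ (fun t : I => (b - a) * t + a) := rfl
  have hmono : MonotoneOn (fun t : I => (b-a)*(t:ℝ) + a) (univ : Set I) := by
    intro s _ t _ hst
    have := mul_le_mul_of_nonneg_left (Subtype.coe_le_coe.2 hst) (sub_nonneg.2 hab)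
    dsimp
    linarith
  rw [pathLength, h, eVariationOn.comp_eq_of_monotoneOn (f := g) _ hmono]
  congr 1
  ext z
  constructor
  · rintro ⟨t, -, rfl⟩
    have h0 := t.2.1
    have h1 := t.2.2
    have hba := sub_nonneg.2 hab
    constructor
    · dsimp; nlinarith
    · dsimp; nlinarith
  · intro hz
    rcases eq_or_lt_of_le hab with h' | h'
    · refine ⟨0, trivial, ?_⟩
      have hz1 := hz.1
      have hz2 := hz.2
      rw [← h'] at hz2
      have : z = a := le_antisymm hz2 hz1
      simp [this]
    · refine ⟨⟨(z - a)/(b - a), div_nonneg (by linarith [hz.1]) (by linarith),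
        by rw [div_le_one (by linarith)]; linarith [hz.2]⟩, trivial, ?_⟩
      dsimp
      have hne : b - a ≠ 0 := ne_of_gt (by linarith)
      field_simp
      ring


theorem evar_left_approx {g : ℝ → X} {a c : ℝ} (hac : a < c) (hg : ContinuousAt g c)
    {l : ℝ≥0∞} (h : l < eVariationOn g (Icc a c)) :
    ∃ c' ∈ Ico a c, l < eVariationOn g (Icc a c') := by
  rw [eVariationOn, lt_iSup_iff] at h
  obtain ⟨⟨m, u, hu, us⟩, hsum⟩ := h
  dsimp at hsum
  obtain ⟨ε', hε'pos, hε'⟩ := ENNReal.lt_iff_exists_add_pos_lt.1 hsum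
  set ε : ℝ≥0 := ε' / (4 * (m + 1)) with hε
  have hεpos : 0 < ε := div_pos hε'pos (by positivity)
  have hεle : (m : ℝ≥0) * (4 * ε) ≤ ε' := by
    rw [hε, ← NNReal.coe_le_coe]
    push_cast
    have h2 : (0:ℝ) < 4*((m:ℝ)+1) := by positivity
    have h3 : (0:ℝ) ≤ (ε' : ℝ) := ε'.2
    calc (m:ℝ) * (4 * ((ε':ℝ) / (4*((m:ℝ)+1)))) = (ε':ℝ) * (4*(m:ℝ)) / (4*((m:ℝ)+1)) := by
          ring
      _ ≤ (ε':ℝ) := by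
          rw [div_le_iff₀ h2]
          nlinarith
  -- continuity at c
  obtain ⟨δ, hδpos, hδ⟩ := Metric.continuousAt_iff.1 hg (ε : ℝ) (by exact_mod_cast hεpos)
  set c' := max a (c - δ/2) with hc'
  have hac' : a ≤ c' := le_max_left _ _
  have hc'c : c' < c := max_lt hac (by linarith)
  have hnear : ∀ t ∈ Icc c' c, edist (g t) (g c) ≤ (ε : ℝ≥0∞) := by
    intro t ht
    have h2 : c - δ/2 ≤ t := le_trans (le_max_right a (c - δ/2)) ht.1
    have h1 : dist t c < δ := by
      rw [Real.dist_eq, abs_lt]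
      exact ⟨by linarith, by linarith [ht.2]⟩
    have h3 := hδ h1
    rw [edist_dist, ← ENNReal.ofReal_coe_nnreal]
    exact ENNReal.ofReal_le_ofReal h3.le
  have corr : ∀ t ∈ Icc a c, edist (g t) (g (min t c')) ≤ 2 * (ε : ℝ≥0∞) := by
    intro t ht
    rcases le_or_gt t c' with h' | h'
    · rw [min_eq_left h']
      simp
    · rw [min_eq_right h'.le]
      calc edist (g t) (g c') ≤ edist (g t) (g c) + edist (g c) (g c') := edist_triangle _ _ _
        _ ≤ (ε : ℝ≥0∞) + (ε : ℝ≥0∞) := by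
            apply add_le_add
            · exact hnear t ⟨h'.le, ht.2⟩
            · rw [edist_comm]
              exact hnear c' ⟨le_refl _, hc'c.le⟩
        _ = 2 * (ε : ℝ≥0∞) := (two_mul _).symm
  set u' : ℕ → ℝ := fun i => min (u i) c' with hu'
  have hu'mono : Monotone u' := hu.min monotone_const
  have hu'mem : ∀ i, u' i ∈ Icc a c' := fun i => ⟨le_min (us i).1 hac', min_le_right _ _⟩
  have termwise : ∀ i, edist (g (u (i+1))) (g (u i))
      ≤ edist (g (u' (i+1))) (g (u' i)) + 4 * (ε : ℝ≥0∞) := by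
    intro i
    calc edist (g (u (i+1))) (g (u i))
        ≤ edist (g (u (i+1))) (g (u' (i+1))) + edist (g (u' (i+1))) (g (u' i))
          + edist (g (u' i)) (g (u i)) := edist_triangle4 _ _ _ _
      _ ≤ 2 * (ε : ℝ≥0∞) + edist (g (u' (i+1))) (g (u' i)) + 2 * (ε : ℝ≥0∞) := by
          gcongr
          · exact corr _ (us (i+1))
          · rw [edist_comm]
            exact corr _ (us i)
      _ = edist (g (u' (i+1))) (g (u' i)) + 4 * (ε : ℝ≥0∞) := by ring
  have sumbound : (∑ i ∈ Finset.range m, edist (g (u (i+1))) (g (u i)))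
      ≤ (∑ i ∈ Finset.range m, edist (g (u' (i+1))) (g (u' i))) + m * (4 * (ε : ℝ≥0∞)) := by
    calc (∑ i ∈ Finset.range m, edist (g (u (i+1))) (g (u i)))
        ≤ ∑ i ∈ Finset.range m, (edist (g (u' (i+1))) (g (u' i)) + 4 * (ε : ℝ≥0∞)) :=
          Finset.sum_le_sum fun i _ => termwise i
      _ = (∑ i ∈ Finset.range m, edist (g (u' (i+1))) (g (u' i))) + m * (4 * (ε : ℝ≥0∞)) := by
          rw [Finset.sum_add_distrib, Finset.sum_const, Finset.card_range, nsmul_eq_mul]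
  have hfinal : l < ∑ i ∈ Finset.range m, edist (g (u' (i+1))) (g (u' i)) := by
    have hmul : (m : ℝ≥0∞) * (4 * (ε : ℝ≥0∞)) ≤ (ε' : ℝ≥0∞) := by
      have : ((m * (4 * ε) : ℝ≥0) : ℝ≥0∞) ≤ ((ε' : ℝ≥0) : ℝ≥0∞) := ENNReal.coe_le_coe.2 hεle
      push_cast at this
      exact this
    have h1 : l + ε' < (∑ i ∈ Finset.range m, edist (g (u' (i+1))) (g (u' i))) + ε' := by
      calc l + ε' < ∑ i ∈ Finset.range m, edist (g (u (i+1))) (g (u i)) := hε'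
        _ ≤ (∑ i ∈ Finset.range m, edist (g (u' (i+1))) (g (u' i))) + m * (4 * (ε : ℝ≥0∞)) :=
            sumbound
        _ ≤ (∑ i ∈ Finset.range m, edist (g (u' (i+1))) (g (u' i))) + ε' := by gcongr
    exact lt_of_add_lt_add_right h1
  refine ⟨c', ⟨hac', hc'c⟩, lt_of_lt_of_le hfinal ?_⟩
  exact eVariationOn.sum_le (f := g) (n := m) hu'mono hu'mem


theorem evar_add (g : ℝ → X) {a b c : ℝ} (hab : a ≤ b) (hbc : b ≤ c) :
    eVariationOn g (Icc a b) + eVariationOn g (Icc b c) = eVariationOn g (Icc a c) := by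
  have := eVariationOn.Icc_add_Icc g (s := (univ : Set ℝ)) hab hbc (mem_univ b)
  simpa using this

theorem evar_self (g : ℝ → X) (a : ℝ) : eVariationOn g (Icc a a) = 0 := by
  apply eVariationOn.subsingleton
  rw [Icc_self]
  exact subsingleton_singleton

theorem evar_right_approx {g : ℝ → X} {c d : ℝ} (hcd : c < d) (hg : ContinuousAt g c)
    {l : ℝ≥0∞} (h : l < eVariationOn g (Icc c d)) :
    ∃ c'' ∈ Ioc c d, l < eVariationOn g (Icc c'' d) := by
  have hrefl : ∀ p q : ℝ, eVariationOn (fun t : ℝ => g (-t)) (Icc p q)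
      = eVariationOn g (Icc (-q) (-p)) := by
    intro p q
    have hanti : AntitoneOn (fun t : ℝ => -t) (Icc p q) := fun s _ t _ hst => by dsimp; linarith
    have hcomp := eVariationOn.comp_eq_of_antitoneOn (f := g) (φ := fun t : ℝ => -t) hanti
    have hfe : (fun t : ℝ => g (-t)) = g ∘ fun t : ℝ => -t := rfl
    rw [hfe, hcomp]
    congr 1
    ext z
    constructor
    · rintro ⟨t, ht, rfl⟩
      constructor
      · dsimp; linarith [ht.2]
      · dsimp; linarith [ht.1]
    · intro hz
      exact ⟨-z, ⟨by linarith [hz.2], by linarith [hz.1]⟩, by ring⟩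
  have hg' : ContinuousAt (fun t : ℝ => g (-t)) (-c) := by
    apply ContinuousAt.comp (x := -c) (g := g) (f := fun t : ℝ => -t)
    · rw [neg_neg]
      exact hg
    · exact continuous_neg.continuousAt
  have h' : l < eVariationOn (fun t : ℝ => g (-t)) (Icc (-d) (-c)) := by
    rw [hrefl]
    simpa using h
  obtain ⟨c', ⟨hdc', hc'c⟩, hgt⟩ := evar_left_approx (by linarith) hg' h'
  refine ⟨-c', ⟨by linarith, by linarith⟩, ?_⟩
  rw [hrefl] at hgt
  simpa using hgt

theorem evar_right_small {g : ℝ → X} {c b : ℝ} (hcb : c < b) (hg : ContinuousAt g c)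
    (hfin : eVariationOn g (Icc c b) ≠ ⊤) {δ : ℝ≥0∞} (hδ : 0 < δ) :
    ∃ c'' ∈ Ioc c b, eVariationOn g (Icc c c'') < δ := by
  by_cases hV : eVariationOn g (Icc c b) < δ
  · exact ⟨b, ⟨hcb, le_refl _⟩, lt_of_le_of_lt (by
      apply eVariationOn.mono
      intro t ht
      exact ht) hV⟩
  push_neg at hV
  have hδtop : δ ≠ ⊤ := by
    intro hh
    rw [hh] at hV
    exact hfin (top_le_iff.1 hV)
  have hVpos : eVariationOn g (Icc c b) ≠ 0 := by
    intro h0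
    rw [h0] at hV
    exact (hδ.trans_le hV).false
  have hlt : eVariationOn g (Icc c b) - δ < eVariationOn g (Icc c b) :=
    ENNReal.sub_lt_self hfin hVpos hδ.ne'
  obtain ⟨c'', hc''mem, hgt⟩ := evar_right_approx hcb hg hlt
  refine ⟨c'', hc''mem, ?_⟩
  have hadd := evar_add g hc''mem.1.le hc''mem.2
  have hBfin : eVariationOn g (Icc c'' b) ≠ ⊤ := by
    intro hh
    rw [← hadd, hh, add_top] at hfin
    exact hfin rfl
  have hVlt : eVariationOn g (Icc c b) < eVariationOn g (Icc c'' b) + δ :=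
    (ENNReal.sub_lt_iff_lt_right hδtop hV).1 hgt
  rw [← hadd] at hVlt
  rw [add_comm] at hVlt
  exact (ENNReal.add_lt_add_iff_left hBfin).1 hVlt

theorem exists_split {g : ℝ → X} (hg : Continuous g) {a b : ℝ} (hab : a ≤ b)
    (hfin : eVariationOn g (Icc a b) ≠ ⊤) {l : ℝ≥0∞} (hl : 0 < l) (hltop : l ≠ ⊤)
    (hbig : l < eVariationOn g (Icc a b)) :
    ∃ c ∈ Icc a b, eVariationOn g (Icc a c) ≤ l ∧
      l + eVariationOn g (Icc c b) ≤ eVariationOn g (Icc a b) := by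
  set S := {t : ℝ | t ∈ Icc a b ∧ eVariationOn g (Icc a t) ≤ l} with hS
  have haS : a ∈ S := ⟨⟨le_refl a, hab⟩, by rw [evar_self]; exact zero_le⟩
  have hbdd : BddAbove S := ⟨b, fun t ht => ht.1.2⟩
  set c := sSup S with hc
  have hac : a ≤ c := le_csSup hbdd haS
  have hcb : c ≤ b := csSup_le ⟨a, haS⟩ fun t ht => ht.1.2
  have claim1 : eVariationOn g (Icc a c) ≤ l := by
    by_contra hgt
    push_neg at hgt
    have hac' : a < c := by
      rcases eq_or_lt_of_le hac with h' | h'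
      · rw [← h', evar_self] at hgt
        exact absurd hgt (not_lt.2 zero_le)
      · exact h'
    obtain ⟨c', ⟨hac'', hc'c⟩, hgt'⟩ := evar_left_approx hac' hg.continuousAt hgt
    have hub : ∀ t ∈ S, t ≤ c' := by
      intro t ht
      by_contra hgt2
      push_neg at hgt2
      have : eVariationOn g (Icc a c') ≤ eVariationOn g (Icc a t) :=
        eVariationOn.mono g (Icc_subset_Icc le_rfl hgt2.le)
      exact absurd (this.trans ht.2) (not_le.2 hgt')
    exact absurd (csSup_le ⟨a, haS⟩ hub) (not_le.2 hc'c)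
  refine ⟨c, ⟨hac, hcb⟩, claim1, ?_⟩
  rcases eq_or_lt_of_le hcb with h' | h'
  · rw [h', evar_self, add_zero]
    exact hbig.le
  · have claim2 : l ≤ eVariationOn g (Icc a c) := by
      by_contra hlt2
      push_neg at hlt2
      have hδ : 0 < l - eVariationOn g (Icc a c) := tsub_pos_of_lt hlt2
      have hfincb : eVariationOn g (Icc c b) ≠ ⊤ := by
        intro hh
        exact hfin (top_le_iff.1 (hh ▸ eVariationOn.mono g (Icc_subset_Icc hac le_rfl)))
      obtain ⟨c'', ⟨hcc'', hc''b⟩, hsmall⟩ := evar_right_small h' hg.continuousAt hfincb hδ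
      have hmem : c'' ∈ S := by
        refine ⟨⟨hac.trans hcc''.le, hc''b⟩, ?_⟩
        have hadd := evar_add g hac hcc''.le
        rw [← hadd]
        calc eVariationOn g (Icc a c) + eVariationOn g (Icc c c'')
            ≤ eVariationOn g (Icc a c) + (l - eVariationOn g (Icc a c)) := by
              exact add_le_add_right hsmall.le _
          _ = l := add_tsub_cancel_of_le hlt2.le
      exact absurd (le_csSup hbdd hmem) (not_le.2 hcc'')
    calc l + eVariationOn g (Icc c b)
        ≤ eVariationOn g (Icc a c) + eVariationOn g (Icc c b) := add_le_add_left claim2 _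
      _ = eVariationOn g (Icc a b) := evar_add g hac hcb


-- new material

theorem cancel_lemma {x y : X} {A B : Path x y}
    (h : (A.trans B.symm).Homotopic (Path.refl x)) : A.Homotopic B := by
  have h1 : (A.trans (Path.refl y)).Homotopic A := ⟨Path.Homotopy.transRefl A⟩
  have h2 : (A.trans (Path.refl y)).Homotopic (A.trans (B.symm.trans B)) :=
    Path.Homotopic.hcomp (Path.Homotopic.refl A) ⟨Path.Homotopy.reflSymmTrans B⟩
  have h3 : ((A.trans B.symm).trans B).Homotopic (A.trans (B.symm.trans B)) :=
    ⟨Path.Homotopy.transAssoc A B.symm B⟩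
  have h4 : ((A.trans B.symm).trans B).Homotopic ((Path.refl x).trans B) :=
    Path.Homotopic.hcomp h (Path.Homotopic.refl B)
  have h5 : ((Path.refl x).trans B).Homotopic B := ⟨Path.Homotopy.reflTrans B⟩
  exact (((h1.symm.trans h2).trans h3.symm).trans h4).trans h5

variable {g : ℝ → X} (hg : Continuous g) {x : X} {r : ℝ}

theorem base_case (hr0 : 0 ≤ r) (hr1 : r < 1)
    (geo : ∀ p : X, Path x p) (hgeo : ∀ p, pathLength (geo p) = edist x p)
    (hshort : ∀ p : Path x x, pathLength p < 2 → p.Homotopic (Path.refl x))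
    (hdist : ∀ t ∈ Icc (0:ℝ) 1, dist x (g t) ≤ r)
    {a b : ℝ} (h0a : 0 ≤ a) (hab : a ≤ b) (hb1 : b ≤ 1)
    (hvar : eVariationOn g (Icc a b) ≤ ENNReal.ofReal (1 - r)) :
    ((geo (g a)).trans (subPath hg a b)).Homotopic (geo (g b)) := by
  apply cancel_lemma
  apply hshort
  have hedist : ∀ t ∈ Icc (0:ℝ) 1, edist x (g t) ≤ ENNReal.ofReal r := by
    intro t ht
    rw [edist_dist]
    exact ENNReal.ofReal_le_ofReal (hdist t ht)
  have hmema : a ∈ Icc (0:ℝ) 1 := ⟨h0a, hab.trans hb1⟩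
  have hmemb : b ∈ Icc (0:ℝ) 1 := ⟨h0a.trans hab, hb1⟩
  calc pathLength (((geo (g a)).trans (subPath hg a b)).trans (geo (g b)).symm)
      = (pathLength (geo (g a)) + pathLength (subPath hg a b)) + pathLength (geo (g b)) := by
        rw [pathLength_trans_s12, pathLength_trans_s12, pathLength_symm_s12]
    _ ≤ (ENNReal.ofReal r + ENNReal.ofReal (1 - r)) + ENNReal.ofReal r := by
        gcongr
        · rw [hgeo]; exact hedist a hmema
        · rw [pathLength_subPath hg hab]; exact hvar
        · rw [hgeo]; exact hedist b hmemb
    _ = ENNReal.ofReal (1 + r) := by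
        rw [← ENNReal.ofReal_add hr0 (by linarith), ← ENNReal.ofReal_add (by linarith) hr0]
        norm_num
    _ < 2 := by
        rw [show (2 : ℝ≥0∞) = ENNReal.ofReal 2 by norm_num]
        exact (ENNReal.ofReal_lt_ofReal_iff (by norm_num)).2 (by linarith)

theorem key_induction (hr0 : 0 ≤ r) (hr1 : r < 1)
    (geo : ∀ p : X, Path x p) (hgeo : ∀ p, pathLength (geo p) = edist x p)
    (hshort : ∀ p : Path x x, pathLength p < 2 → p.Homotopic (Path.refl x))
    (hdist : ∀ t ∈ Icc (0:ℝ) 1, dist x (g t) ≤ r)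
    (hfin : eVariationOn g (Icc (0:ℝ) 1) ≠ ⊤) :
    ∀ k : ℕ, ∀ a b : ℝ, 0 ≤ a → a ≤ b → b ≤ 1 →
      eVariationOn g (Icc a b) ≤ ((k : ℝ≥0∞) + 1) * ENNReal.ofReal (1 - r) →
      ((geo (g a)).trans (subPath hg a b)).Homotopic (geo (g b)) := by
  intro k
  induction k with
  | zero =>
    intro a b h0a hab hb1 hvar
    refine base_case hg hr0 hr1 geo hgeo hshort hdist h0a hab hb1 ?_
    simpa using hvar
  | succ k ih =>
    intro a b h0a hab hb1 hvar
    set l := ENNReal.ofReal (1 - r) with hl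
    by_cases hsmall : eVariationOn g (Icc a b) ≤ ((k : ℝ≥0∞) + 1) * l
    · exact ih a b h0a hab hb1 hsmall
    push_neg at hsmall
    have hlpos : 0 < l := ENNReal.ofReal_pos.2 (by linarith)
    have hltop : l ≠ ⊤ := ENNReal.ofReal_ne_top
    have hfinab : eVariationOn g (Icc a b) ≠ ⊤ :=
      ne_top_of_le_ne_top hfin (eVariationOn.mono g (Icc_subset_Icc h0a hb1))
    have hone : (1 : ℝ≥0∞) ≤ (k : ℝ≥0∞) + 1 := le_add_self
    have hbig : l < eVariationOn g (Icc a b) :=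
      lt_of_le_of_lt (le_mul_of_one_le_left' hone) hsmall
    obtain ⟨c, ⟨hac, hcb⟩, hvac, hsum⟩ := exists_split hg hab hfinab hlpos hltop hbig
    have hvcb : eVariationOn g (Icc c b) ≤ ((k : ℝ≥0∞) + 1) * l := by
      have h1 : l + eVariationOn g (Icc c b) ≤ l + ((k : ℝ≥0∞) + 1) * l := by
        apply hsum.trans
        apply hvar.trans
        apply le_of_eq
        push_cast
        ring
      exact (ENNReal.add_le_add_iff_left hltop).1 h1
    have H1 : ((geo (g a)).trans (subPath hg a c)).Homotopic (geo (g c)) :=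
      ih a c h0a hac (hcb.trans hb1) (hvac.trans (le_mul_of_one_le_left' hone))
    have H2 : ((geo (g c)).trans (subPath hg c b)).Homotopic (geo (g b)) :=
      ih c b (h0a.trans hac) hcb hb1 hvcb
    have S1 : ((geo (g a)).trans (subPath hg a b)).Homotopic
        ((geo (g a)).trans ((subPath hg a c).trans (subPath hg c b))) :=
      Path.Homotopic.hcomp (Path.Homotopic.refl _) (subPath_split hg a c b)
    have S2 : ((geo (g a)).trans ((subPath hg a c).trans (subPath hg c b))).Homotopic
        (((geo (g a)).trans (subPath hg a c)).trans (subPath hg c b)) :=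
      Path.Homotopic.symm ⟨Path.Homotopy.transAssoc _ _ _⟩
    have S3 : (((geo (g a)).trans (subPath hg a c)).trans (subPath hg c b)).Homotopic
        ((geo (g c)).trans (subPath hg c b)) :=
      Path.Homotopic.hcomp H1 (Path.Homotopic.refl _)
    exact ((S1.trans S2).trans S3).trans H2


theorem exists_far_point (hgeo : IsGeodesicSpace X)
    {x : X} (γ : Path x x) (hnc : ¬γ.Homotopic (Path.refl x)) (hrect : pathLength γ ≠ ⊤)
    (hshort : ∀ p : Path x x, pathLength p < 2 → p.Homotopic (Path.refl x)) :
    ∃ t : I, 1 ≤ dist x (γ t) := by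
  by_contra hall
  push_neg at hall
  -- maximum of the distance function on I
  obtain ⟨t₀, -, ht₀⟩ := isCompact_univ.exists_isMaxOn (univ_nonempty)
    ((continuous_const.dist γ.continuous).continuousOn (s := (univ : Set I)))
  set r := dist x (γ t₀) with hrdef
  have hr1 : r < 1 := hall t₀
  have hr0 : 0 ≤ r := dist_nonneg
  set g := γ.extend with hgdef
  have hg : Continuous g := γ.continuous_extend
  have hdist : ∀ s ∈ Icc (0:ℝ) 1, dist x (g s) ≤ r := by
    intro s hs
    rw [hgdef, Path.extend_apply γ hs]
    exact ht₀ (mem_univ (⟨s, hs⟩ : I))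
  have hfin : eVariationOn g (Icc (0:ℝ) 1) ≠ ⊤ := by
    rw [← pathLength_eq_extend]
    exact hrect
  -- choose geodesics
  choose geo hgeospec using hgeo x
  have hconst : ∀ (p : X), edist x p = 0 → ∀ s : I, (geo p) s = x := by
    intro p hp s
    have h0 : pathLength (geo p) = 0 := by rw [hgeospec, hp]
    have hle := eVariationOn.edist_le (⇑(geo p)) (mem_univ s) (mem_univ (0 : I))
    rw [← pathLength, h0] at hle
    have hz : edist ((geo p) s) ((geo p) 0) = 0 := le_antisymm hle zero_le
    rw [edist_eq_zero] at hz
    rw [hz, Path.source]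
  have hl0 : (0:ℝ≥0∞) < ENNReal.ofReal (1 - r) := ENNReal.ofReal_pos.2 (by linarith)
  obtain ⟨k, hk⟩ : ∃ k : ℕ, eVariationOn g (Icc (0:ℝ) 1)
      ≤ ((k : ℝ≥0∞) + 1) * ENNReal.ofReal (1 - r) := by
    obtain ⟨k, hk⟩ := ENNReal.exists_nat_gt
      (r := eVariationOn g (Icc (0:ℝ) 1) / ENNReal.ofReal (1 - r))
      (ENNReal.div_lt_top hfin hl0.ne').ne
    refine ⟨k, ?_⟩
    have h2 := (ENNReal.div_lt_iff (Or.inl hl0.ne') (Or.inl ENNReal.ofReal_ne_top)).1 hk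
    exact h2.le.trans (mul_le_mul_left (self_le_add_right _ _) _)
  have H := key_induction hg hr0 hr1 geo hgeospec hshort hdist hfin k 0 1
    le_rfl zero_le_one le_rfl hk
  have hMrefl : (((geo (g 0)).trans (subPath hg 0 1)).trans (geo (g 1)).symm).Homotopic
      (Path.refl x) := by
    have h1 : (((geo (g 0)).trans (subPath hg 0 1)).trans (geo (g 1)).symm).Homotopic
        ((geo (g 1)).trans (geo (g 1)).symm) := Path.Homotopic.hcomp H (Path.Homotopic.refl _)
    have h2 : (Path.refl x).Homotopic ((geo (g 1)).trans (geo (g 1)).symm) :=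
      ⟨Path.Homotopy.reflTransSymm _⟩
    exact h1.trans h2.symm
  have hg0 : g 0 = x := γ.extend_zero
  have hg1 : g 1 = x := γ.extend_one
  have he0 : edist x (g 0) = 0 := by rw [hg0, edist_self]
  have he1 : edist x (g 1) = 0 := by rw [hg1, edist_self]
  have hγM : γ.Homotopic (((geo (g 0)).trans (subPath hg 0 1)).trans (geo (g 1)).symm) := by
    apply homotopic_of_comp hg (u := fun t : I => (t : ℝ))
      (v := fun t : I => min 1 (max 0 (4 * (t:ℝ) - 1)))
    · exact continuous_subtype_val
    · fun_prop
    · norm_num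
    · norm_num
    · intro t
      exact (γ.extend_extends' t).symm
    · intro t
      rw [Path.trans_apply]
      split_ifs with h1
      · rw [Path.trans_apply]
        split_ifs with h2
        · have h2' : 2 * (t:ℝ) ≤ 1/2 := h2
          rw [hconst (g 0) he0]
          have hv : min 1 (max 0 (4 * (t:ℝ) - 1)) = 0 := by
            rw [max_eq_left (by linarith), min_eq_right (by norm_num)]
          rw [hv, hg0]
        · have h2' : ¬(2 * (t:ℝ) ≤ 1/2) := h2
          push_neg at h2'
          show g _ = g _
          congr 1
          have hv : min 1 (max 0 (4 * (t:ℝ) - 1)) = 4 * (t:ℝ) - 1 := by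
            rw [max_eq_right (by linarith), min_eq_right (by linarith)]
          rw [hv]
          ring
      · rw [Path.symm_apply]
        simp only [Function.comp_apply]
        rw [hconst (g 1) he1]
        push_neg at h1
        have hv : min 1 (max 0 (4 * (t:ℝ) - 1)) = 1 := by
          rw [max_eq_right (by linarith), min_eq_left (by linarith)]
        rw [hv, hg1]
  exact hnc (hγM.trans hMrefl)


end Metric

end SysAux

/-- If `sys(X) = 2` and `C ⊆ X` contains the image of a rectifiable
noncontractible loop, then for every `n ≥ 1` the set `C` admits a `(1/n)`-separated
subset with at least `n+1` elements. -/
theorem separated_set_in_essential_curve {X : Type*} [MetricSpace X] [CompactSpace X]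
    (hgeo : IsGeodesicSpace X) (hsys : systole X = 2)
    (C : Set X) (x : X) (γ : Path x x) (hnc : ¬γ.Homotopic (Path.refl x))
    (hrect : pathLength γ ≠ ⊤) (hsub : Set.range ⇑γ ⊆ C)
    (n : ℕ) (hn : 0 < n) :
    ∃ pts : Fin (n + 1) → X, (∀ i, pts i ∈ C) ∧
      ∀ i j, i ≠ j → (1 : ℝ) / n ≤ dist (pts i) (pts j) := by
  classical
  have hshort : ∀ p : Path x x, pathLength p < 2 → p.Homotopic (Path.refl x) := by
    intro p hp
    by_contra hq
    have hle : systole X ≤ pathLength p := sInf_le ⟨x, p, hq, rfl⟩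
    rw [hsys] at hle
    exact absurd (lt_of_le_of_lt hle hp) (lt_irrefl _)
  obtain ⟨tstar, htstar⟩ := SysAux.exists_far_point hgeo γ hnc hrect hshort
  set g := γ.extend with hgdef
  have hg : Continuous g := γ.continuous_extend
  have hcont : Continuous fun s : ℝ => dist x (g s) := continuous_const.dist hg
  have h0 : dist x (g 0) = 0 := by rw [show g 0 = x from γ.extend_zero, dist_self]
  have hnpos : (0:ℝ) < n := by exact_mod_cast hn
  have hselect : ∀ i : Fin (n+1), ∃ s ∈ Icc (0:ℝ) (tstar:ℝ), dist x (g s) = (i:ℝ) / n := by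
    intro i
    apply intermediate_value_Icc tstar.2.1 hcont.continuousOn
    constructor
    · rw [h0]
      positivity
    · have hgt : g (tstar:ℝ) = γ tstar := γ.extend_extends' tstar
      rw [hgt]
      have hile : ((i:ℕ):ℝ) ≤ (n:ℝ) := by
        exact_mod_cast Nat.lt_succ_iff.1 i.2
      calc (i:ℝ) / n ≤ 1 := by
            rw [div_le_one hnpos]
            exact hile
        _ ≤ dist x (γ tstar) := htstar
  choose s hs1 hs2 using hselect
  refine ⟨fun i => g (s i), fun i => ?_, fun i j hij => ?_⟩
  · apply hsub
    have hmem : s i ∈ Icc (0:ℝ) 1 := ⟨(hs1 i).1, (hs1 i).2.trans tstar.2.2⟩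
    exact ⟨⟨s i, hmem⟩, (γ.extend_apply hmem).symm⟩
  · have h1 : |dist x (g (s i)) - dist x (g (s j))| ≤ dist (g (s i)) (g (s j)) := by
      have h2 := abs_dist_sub_le (g (s i)) (g (s j)) x
      rwa [dist_comm (g (s i)) x, dist_comm (g (s j)) x] at h2
    rw [hs2 i, hs2 j] at h1
    refine le_trans ?_ h1
    rw [div_sub_div_same, abs_div, abs_of_pos hnpos]
    have hne : ((i:ℕ):ℤ) ≠ ((j:ℕ):ℤ) := by
      exact_mod_cast fun h => hij (Fin.ext h)
    have h1le : (1:ℤ) ≤ |((i:ℕ):ℤ) - ((j:ℕ):ℤ)| := Int.one_le_abs (sub_ne_zero.2 hne)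
    have hge : (1:ℝ) ≤ |(i:ℝ) - (j:ℝ)| := by exact_mod_cast h1le
    gcongr
end

section
/- Let X be a compact geodesic metric space, p ∈ X, and ρ > 0. If the level set {x ∈ X : dist(p,x) = ρ} of the distance function from p contains the image of a rectifiable noncontractible loop of X, then ρ ≥ sys(X,p)/2; in particular, ρ ≥ sys(X)/2. -/
namespace NLFAux

open CategoryTheory unitInterval Set
open scoped ENNReal NNReal

attribute [local instance] Path.Homotopic.setoid

section Groupoid
variable {X : Type*} [TopologicalSpace X]

def hq {u v : X} (p : Path u v) : FundamentalGroupoid.mk u ⟶ FundamentalGroupoid.mk v := ⟦p⟧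

theorem hq_trans {u v w : X} (p : Path u v) (q : Path v w) : hq (p.trans q) = hq p ≫ hq q := rfl

theorem hq_symm {u v : X} (p : Path u v) : hq p.symm = Groupoid.inv (hq p) := rfl

theorem hq_refl (u : X) : hq (Path.refl u) = 𝟙 (FundamentalGroupoid.mk u) := rfl

theorem hq_eq_of_homotopic {u v : X} (p q : Path u v) (h : p.Homotopic q) : hq p = hq q :=
  Quotient.sound h

theorem homotopic_of_hq_eq {u v : X} (p q : Path u v) (h : hq p = hq q) : p.Homotopic q :=
  Quotient.exact h

theorem hq_eqToHom {u v u' v' : X} (p : Path u v) (q : Path u' v') (h : ∀ t, p t = q t)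
    (hu : u = u') (hv : v' = v) :
    hq p = eqToHom (congrArg FundamentalGroupoid.mk hu) ≫ hq q
      ≫ eqToHom (congrArg FundamentalGroupoid.mk hv) := by
  subst hu
  subst hv
  simp only [eqToHom_refl, Category.comp_id, Category.id_comp]
  have hpq : p = q := by ext t; exact h t
  rw [hpq]

theorem hq_comp_eqToHom {pb : X} (g : ∀ y : X, Path pb y) {y x : X} (h : y = x) :
    hq (g y) ≫ eqToHom (congrArg FundamentalGroupoid.mk h) = hq (g x) := by
  subst h
  simp

end Groupoid

section Seg
variable {X : Type*} [TopologicalSpace X]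

def segMap (a b : I) (t : I) : I :=
  ⟨(1 - t.1) * a.1 + t.1 * b.1, by
    constructor
    · have := t.2.1; have := t.2.2; have := a.2.1; have := b.2.1; nlinarith
    · have := t.2.1; have := t.2.2; have := a.2.2; have := b.2.2; nlinarith⟩

theorem segMap_continuous (a b : I) : Continuous (segMap a b) := by
  apply Continuous.subtype_mk; fun_prop

theorem segMap_zero (a b : I) : segMap a b 0 = a := by simp [segMap]
theorem segMap_one (a b : I) : segMap a b 1 = b := by simp [segMap]


theorem segMap_monotone {a b : I} (hab : a ≤ b) : Monotone (segMap a b) := by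
  intro s t hst
  show ((1:ℝ) - s.1) * a.1 + s.1 * b.1 ≤ (1 - t.1) * a.1 + t.1 * b.1
  have hab' : (a:ℝ) ≤ b := hab
  have hst' : (s:ℝ) ≤ t := hst
  nlinarith

theorem segMap_mem {a b : I} (hab : a ≤ b) (t : I) : segMap a b t ∈ Icc a b := by
  constructor
  · have h := segMap_monotone hab (show (0:I) ≤ t from t.2.1)
    rwa [segMap_zero] at h
  · have h := segMap_monotone hab (show t ≤ (1:I) from t.2.2)
    rwa [segMap_one] at h

def subPath {x y : X} (γ : Path x y) (a b : I) : Path (γ a) (γ b) where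
  toFun := fun t => γ (segMap a b t)
  continuous_toFun := γ.continuous.comp (segMap_continuous a b)
  source' := by show γ (segMap a b 0) = γ a; rw [segMap_zero]
  target' := by show γ (segMap a b 1) = γ b; rw [segMap_one]

theorem subPath_apply {x y : X} (γ : Path x y) (a b t : I) :
    subPath γ a b t = γ (segMap a b t) := rfl

theorem subPath_trans_homotopic {x y : X} (γ : Path x y) {a c b : I}
    (hac : a ≤ c) (hcb : c ≤ b) :
    ((subPath γ a c).trans (subPath γ c b)).Homotopic (subPath γ a b) := by
  rcases eq_or_lt_of_le (hac.trans hcb) with hab | hab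
  · -- a = b, hence a = c = b
    obtain rfl : a = c := le_antisymm hac (hcb.trans_eq hab.symm)
    obtain rfl : a = b := hab
    have h1 : subPath γ a a = Path.refl (γ a) := by
      ext t
      show γ (segMap a a t) = γ a
      congr 1
      apply Subtype.ext
      show (1 - t.1) * a.1 + t.1 * a.1 = a.1
      ring
    rw [h1]
    exact ⟨Path.Homotopy.reflTrans _⟩
  · have hba : b.1 - a.1 ≠ 0 := by
      have : a.1 < b.1 := hab
      linarith
    set s : ℝ := (c.1 - a.1) / (b.1 - a.1) with hs_def
    have hs0 : 0 ≤ s := div_nonneg (by have : a.1 ≤ c.1 := hac; linarith)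
      (by have : a.1 < b.1 := hab; linarith)
    have hs1 : s ≤ 1 := by
      rw [div_le_one (by have : a.1 < b.1 := hab; linarith)]
      have : c.1 ≤ b.1 := hcb; linarith
    have hfr : Continuous (fun r : ℝ => if r ≤ 1/2 then 2*r*s else (2*r-1)+(2-2*r)*s) := by
      apply Continuous.if_le (by fun_prop) (by fun_prop) continuous_id continuous_const
      intro r hr; simp only [id_eq] at hr; rw [hr]; ring
    set f : I → I := fun t => ⟨if t.1 ≤ 1/2 then 2*t.1*s else (2*t.1-1)+(2-2*t.1)*s, by
      split_ifs with h
      · have h0 := t.2.1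
        constructor
        · nlinarith [mul_nonneg h0 hs0]
        · nlinarith [mul_nonneg (sub_nonneg.2 h) (sub_nonneg.2 hs1)]
      · push_neg at h
        have h1 := t.2.2
        constructor
        · nlinarith [mul_nonneg (by linarith : (0:ℝ) ≤ 2 - 2*t.1) hs0]
        · nlinarith [mul_nonneg (by linarith : (0:ℝ) ≤ 2 - 2*t.1) (sub_nonneg.2 hs1)]⟩ with hf_def
    have hfc : Continuous f := by
      apply Continuous.subtype_mk
      exact hfr.comp continuous_subtype_val
    have hf0 : f 0 = 0 := by
      apply Subtype.ext
      show (if (0:ℝ) ≤ 1/2 then _ else _) = (0:ℝ)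
      rw [if_pos (by norm_num)]
      show 2*(0:ℝ)*s = 0; ring
    have hf1 : f 1 = 1 := by
      apply Subtype.ext
      show (if (1:ℝ) ≤ 1/2 then _ else _) = (1:ℝ)
      rw [if_neg (by norm_num)]
      show (2*(1:ℝ)-1)+(2-2*1)*s = 1; ring
    have key : (subPath γ a b).reparam f hfc hf0 hf1 = (subPath γ a c).trans (subPath γ c b) := by
      ext t
      rw [Path.coe_reparam]
      show γ (segMap a b (f t)) = ((subPath γ a c).trans (subPath γ c b)) t
      rw [Path.trans_apply]
      split_ifs with h
      · rw [subPath_apply]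
        congr 1
        apply Subtype.ext
        show (1 - (f t).1) * a.1 + (f t).1 * b.1
          = (1 - (2*t.1)) * a.1 + (2*t.1) * c.1
        have : (f t).1 = 2*t.1*s := if_pos h
        rw [this, hs_def]
        field_simp
        ring
      · rw [subPath_apply]
        congr 1
        apply Subtype.ext
        show (1 - (f t).1) * a.1 + (f t).1 * b.1
          = (1 - (2*t.1-1)) * c.1 + (2*t.1-1) * b.1
        have : (f t).1 = (2*t.1-1)+(2-2*t.1)*s := if_neg h
        rw [this, hs_def]
        field_simp
        ring
    have h2 : (subPath γ a b).Homotopic ((subPath γ a b).reparam f hfc hf0 hf1) :=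
      ⟨Path.Homotopy.reparam _ f hfc hf0 hf1⟩
    rw [key] at h2
    exact h2.symm



end Seg

section Var
variable {X : Type*} [PseudoEMetricSpace X]
theorem Icc_zero_one : (Icc (0:I) 1) = univ := by
  ext t
  simp only [mem_Icc, mem_univ, iff_true]
  exact ⟨unitInterval.nonneg' , unitInterval.le_one'⟩

theorem pathLength_trans_le {x y z : X} (p : Path x y) (q : Path y z) :
    pathLength (p.trans q) ≤ pathLength p + pathLength q := by
  have half : (⟨1/2, by norm_num⟩ : I) ∈ Icc (0:I) 1 := by
    constructor <;> [exact (Subtype.coe_le_coe.1 (by norm_num)); exact (Subtype.coe_le_coe.1 (by norm_num))]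
  have key := eVariationOn.Icc_add_Icc (⇑(p.trans q)) (s := univ)
    (a := (0:I)) (b := ⟨1/2, by norm_num⟩) (c := (1:I))
    (Subtype.coe_le_coe.1 (by norm_num)) (Subtype.coe_le_coe.1 (by norm_num)) (mem_univ _)
  simp only [univ_inter, Icc_zero_one] at key
  rw [pathLength, ← key]
  gcongr
  · -- first half
    set φ₁ : I → I := fun t => ⟨min (2*t.1) 1, by
      constructor
      · exact le_min (by have := t.2.1; linarith) zero_le_one
      · exact min_le_right _ _⟩ with hφ₁
    have heq : EqOn (⇑(p.trans q)) (⇑p ∘ φ₁) (Icc 0 ⟨1/2, by norm_num⟩) := by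
      intro t ht
      have ht2 : t.1 ≤ 1/2 := ht.2
      rw [Path.trans_apply, dif_pos ht2]
      show p _ = p (φ₁ t)
      congr 1
      apply Subtype.ext
      show 2*t.1 = min (2*t.1) 1
      rw [min_eq_left (by linarith)]
    rw [eVariationOn.eq_of_eqOn heq]
    apply eVariationOn.comp_le_of_monotoneOn
    · intro s hs t ht hst
      show (⟨min (2*s.1) 1, _⟩ : I) ≤ ⟨min (2*t.1) 1, _⟩
      have : (s:ℝ) ≤ t := hst
      apply Subtype.coe_le_coe.1
      show min (2*s.1) 1 ≤ min (2*t.1) 1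
      exact min_le_min (by linarith) le_rfl
    · exact fun t _ => mem_univ _
  · set φ₂ : I → I := fun t => ⟨max (2*t.1 - 1) 0, by
      constructor
      · exact le_max_right _ _
      · exact max_le (by have := t.2.2; linarith) zero_le_one⟩ with hφ₂
    have heq : EqOn (⇑(p.trans q)) (⇑q ∘ φ₂) (Icc ⟨1/2, by norm_num⟩ 1) := by
      intro t ht
      have ht2 : (1:ℝ)/2 ≤ t.1 := ht.1
      rw [Path.trans_apply]
      rcases eq_or_lt_of_le ht2 with he | hl
      · have key : ∀ (u v : I), u = 1 → v = 0 → p u = (⇑q ∘ φ₂) t := by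
          rintro u v rfl h0
          show p 1 = q (φ₂ t)
          have h2 : φ₂ t = (0 : I) := by
            apply Subtype.ext; show max (2*t.1-1) 0 = 0
            rw [max_eq_right (by linarith [he])]
          rw [h2, Path.source, Path.target]
        rw [dif_pos (le_of_eq he.symm)]
        refine key _ 0 (Subtype.ext ?_) rfl
        show 2*t.1 = ((1:I):ℝ)
        simp only [Icc.coe_one]
        linarith [he]
      · rw [dif_neg (by linarith : ¬ t.1 ≤ 1/2)]
        show q _ = q (φ₂ t)
        congr 1
        apply Subtype.ext
        show 2*t.1 - 1 = max (2*t.1 - 1) 0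
        rw [max_eq_left (by linarith)]
    rw [eVariationOn.eq_of_eqOn heq]
    apply eVariationOn.comp_le_of_monotoneOn
    · intro s hs t ht hst
      have : (s:ℝ) ≤ t := hst
      apply Subtype.coe_le_coe.1
      show max (2*s.1 - 1) 0 ≤ max (2*t.1 - 1) 0
      exact max_le_max (by linarith) le_rfl
    · exact fun t _ => mem_univ _

theorem pathLength_symm_le {x y : X} (p : Path x y) :
    pathLength p.symm ≤ pathLength p := by
  have heq : EqOn (⇑p.symm) (⇑p ∘ unitInterval.symm) univ := fun t _ => rfl
  rw [pathLength, eVariationOn.eq_of_eqOn heq]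
  apply eVariationOn.comp_le_of_antitoneOn
  · intro s _ t _ hst
    show σ t ≤ σ s
    apply Subtype.coe_le_coe.1
    show 1 - t.1 ≤ 1 - s.1
    have : (s:ℝ) ≤ t := hst
    linarith
  · exact fun t _ => mem_univ _


theorem exists_right_small (f : I → X) (hf : Continuous f) {a b : I} (hab : a < b)
    (hfin : eVariationOn f (Icc a b) ≠ ⊤) {ε : ℝ≥0∞} (hε : 0 < ε) :
    ∃ c : I, a < c ∧ c ≤ b ∧ eVariationOn f (Icc a c) ≤ ε := by
  by_cases hVε : eVariationOn f (Icc a b) ≤ ε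
  · exact ⟨b, hab, le_rfl, hVε⟩
  push_neg at hVε
  set V := eVariationOn f (Icc a b) with hV
  have hV0 : V ≠ 0 := fun h => ((h ▸ hVε).trans_le (zero_le : 0 ≤ ε)).false
  have hε2 : (ε/2 : ℝ≥0∞) ≠ 0 := by
    simp only [ne_eq, ENNReal.div_eq_zero_iff]
    push_neg
    exact ⟨hε.ne', by norm_num⟩
  have hsub : V - ε/2 < V := ENNReal.sub_lt_self hfin hV0 hε2
  rw [hV, eVariationOn, lt_iSup_iff] at hsub
  obtain ⟨⟨n, u, hu, us⟩, hlt⟩ := hsub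
  have hVle : V ≤ (∑ i ∈ Finset.range n, edist (f (u (i + 1))) (f (u i))) + ε/2 :=
    le_trans le_tsub_add (add_le_add_left hlt.le _)
  -- uniform continuity
  have hUC : UniformContinuous f := CompactSpace.uniformContinuous_of_continuous hf
  set ε' : ℝ≥0∞ := (ε/2) / (4*(n+1)) with hε'
  have hε'0 : 0 < ε' := ENNReal.div_pos hε2 (by finiteness)
  obtain ⟨δ, hδ0, hδ⟩ := EMetric.uniformContinuous_iff.1 hUC ε' hε'0
  set δr : ℝ := (min δ 1).toReal with hδr
  have hδrpos : 0 < δr := by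
    rw [hδr]
    apply ENNReal.toReal_pos
    · exact (lt_min hδ0 one_pos).ne'
    · exact (min_le_right _ _).trans_lt (by norm_num) |>.ne
  have hδr1 : ENNReal.ofReal δr = min δ 1 := ENNReal.ofReal_toReal (by
    exact ((min_le_right _ _).trans_lt (by norm_num)).ne)
  -- choice of c
  have hab' : (a:ℝ) < b := hab
  set creal : ℝ := min b.1 (a.1 + δr/2) with hcreal
  have hc0 : 0 ≤ creal := le_min b.2.1 (by linarith [a.2.1])
  have hc1 : creal ≤ 1 := (min_le_left _ _).trans b.2.2
  set c : I := ⟨creal, hc0, hc1⟩ with hcdef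
  have hac : a < c := by
    show (a:ℝ) < creal
    apply lt_min hab'
    linarith
  have hcb : c ≤ b := Subtype.coe_le_coe.1 (min_le_left _ _)
  refine ⟨c, hac, hcb, ?_⟩
  -- the perturbed partition
  set v : ℕ → I := fun i => max c (u i) with hvdef
  have hv_mono : Monotone v := fun i j hij => max_le_max le_rfl (hu hij)
  have hv_mem : ∀ i, v i ∈ Icc c b := fun i => ⟨le_max_left _ _, max_le hcb (us i).2⟩
  have hclose : ∀ i, edist (f (u i)) (f (v i)) ≤ ε' := by
    intro i
    rcases le_total c (u i) with h | h
    · rw [show v i = u i from max_eq_right h, edist_self]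
      exact zero_le
    · rw [show v i = c from max_eq_left h]
      apply le_of_lt
      apply hδ
      have h1 : edist (u i) c = ENNReal.ofReal (dist (u i).1 c.1) := by
        rw [edist_dist]; rfl
      rw [h1]
      calc ENNReal.ofReal (dist (u i).1 c.1) ≤ ENNReal.ofReal (δr/2) := by
            apply ENNReal.ofReal_le_ofReal
            rw [Real.dist_eq, abs_le]
            have hai : (a:ℝ) ≤ (u i).1 := (us i).1
            have hci : (u i).1 ≤ creal := h
            have : creal ≤ a.1 + δr/2 := min_le_right _ _
            constructor <;> simp only [hcdef] <;> [linarith; linarith]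
        _ < ENNReal.ofReal δr := by
            apply ENNReal.ofReal_lt_ofReal_iff_of_nonneg (by positivity) |>.2
            linarith
        _ ≤ δ := hδr1 ▸ min_le_left _ _
  have hterm : ∀ i, edist (f (u (i+1))) (f (u i))
      ≤ edist (f (v (i+1))) (f (v i)) + (ε' + ε') := by
    intro i
    calc edist (f (u (i+1))) (f (u i))
        ≤ edist (f (u (i+1))) (f (v (i+1))) + edist (f (v (i+1))) (f (v i))
            + edist (f (v i)) (f (u i)) := edist_triangle4 _ _ _ _
      _ ≤ ε' + edist (f (v (i+1))) (f (v i)) + ε' := by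
          gcongr
          · exact hclose _
          · rw [edist_comm]; exact hclose _
      _ = edist (f (v (i+1))) (f (v i)) + (ε' + ε') := by ring
  have hsum : (∑ i ∈ Finset.range n, edist (f (u (i + 1))) (f (u i)))
      ≤ eVariationOn f (Icc c b) + ε/2 := by
    calc (∑ i ∈ Finset.range n, edist (f (u (i + 1))) (f (u i)))
        ≤ ∑ i ∈ Finset.range n, (edist (f (v (i+1))) (f (v i)) + (ε' + ε')) :=
          Finset.sum_le_sum fun i _ => hterm i
      _ = (∑ i ∈ Finset.range n, edist (f (v (i+1))) (f (v i))) + n * (ε' + ε') := by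
          rw [Finset.sum_add_distrib, Finset.sum_const, Finset.card_range, nsmul_eq_mul]
      _ ≤ eVariationOn f (Icc c b) + ε/2 := by
          gcongr
          · exact eVariationOn.sum_le (f := f) (n := n) hv_mono hv_mem
          · calc (n : ℝ≥0∞) * (ε' + ε') = (n : ℝ≥0∞) * (2 * ε') := by ring
              _ = (2*n) * ((ε/2) / (4*(n+1))) := by rw [hε']; ring
              _ ≤ (4*(n+1)) * ((ε/2) / (4*(n+1))) := by
                  gcongr
                  · norm_num
                  · exact le_self_add
              _ ≤ ε/2 := ENNReal.mul_div_le
  -- conclude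
  have hadd : eVariationOn f (Icc a c) + eVariationOn f (Icc c b) = V := by
    have := eVariationOn.Icc_add_Icc f (s := univ) hac.le hcb (mem_univ c)
    simpa using this
  have hcbfin : eVariationOn f (Icc c b) ≠ ⊤ := by
    intro h
    rw [h] at hadd
    exact hfin (by simpa using hadd.symm)
  rw [← ENNReal.add_le_add_iff_right hcbfin]
  calc eVariationOn f (Icc a c) + eVariationOn f (Icc c b) = V := hadd
    _ ≤ (eVariationOn f (Icc c b) + ε/2) + ε/2 := hVle.trans (add_le_add_left hsum _)
    _ = ε + eVariationOn f (Icc c b) := by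
        rw [add_assoc, ENNReal.add_halves]; ring



theorem symm_antitone : ∀ s t : I, s ≤ t → σ t ≤ σ s := by
  intro s t h
  apply Subtype.coe_le_coe.1
  rw [coe_symm_eq, coe_symm_eq]
  have : (s:ℝ) ≤ t := h
  linarith

theorem symm_image_Icc (u v : I) : σ '' Icc u v = Icc (σ v) (σ u) := by
  ext w
  constructor
  · rintro ⟨z, ⟨h1, h2⟩, rfl⟩
    exact ⟨symm_antitone _ _ h2, symm_antitone _ _ h1⟩
  · rintro ⟨h1, h2⟩
    refine ⟨σ w, ⟨?_, ?_⟩, symm_symm w⟩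
    · have := symm_antitone _ _ h2
      rwa [symm_symm] at this
    · have := symm_antitone _ _ h1
      rwa [symm_symm] at this

theorem evar_symm_comp (f : I → X) (u v : I) :
    eVariationOn (f ∘ σ) (Icc (σ v) (σ u)) = eVariationOn f (Icc u v) := by
  rcases le_total u v with h | h
  · rw [eVariationOn.comp_eq_of_antitoneOn f σ
      (fun s _ t _ hst => symm_antitone s t hst), symm_image_Icc, symm_symm, symm_symm]
  · rw [eVariationOn.subsingleton, eVariationOn.subsingleton]
    · exact subsingleton_Icc_of_ge h
    · exact subsingleton_Icc_of_ge (symm_antitone _ _ h)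

theorem exists_left_small (f : I → X) (hf : Continuous f) {a b : I} (hab : a < b)
    (hfin : eVariationOn f (Icc a b) ≠ ⊤) {ε : ℝ≥0∞} (hε : 0 < ε) :
    ∃ c : I, a ≤ c ∧ c < b ∧ eVariationOn f (Icc c b) ≤ ε := by
  have hab' : σ b < σ a := by
    apply lt_of_le_of_ne (symm_antitone _ _ hab.le)
    intro h
    exact hab.ne ((show b = a by simpa using congrArg σ h).symm)
  have hfin' : eVariationOn (f ∘ σ) (Icc (σ b) (σ a)) ≠ ⊤ := by
    rw [evar_symm_comp]; exact hfin
  obtain ⟨c', hc1, hc2, hc3⟩ := exists_right_small (f ∘ σ) (hf.comp continuous_symm) hab' hfin' hε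
  refine ⟨σ c', ?_, ?_, ?_⟩
  · have := symm_antitone _ _ hc2
    rwa [symm_symm] at this
  · have h := symm_antitone _ _ hc1.le
    rw [symm_symm] at h
    apply lt_of_le_of_ne h
    intro h2
    exact hc1.ne (by simpa using congrArg σ h2.symm)
  · have := evar_symm_comp f (σ c') b
    rw [symm_symm] at this
    rw [← this]
    exact hc3

theorem exists_good_split (f : I → X) (hf : Continuous f) {a b : I} (hab : a ≤ b)
    (hfin : eVariationOn f (Icc a b) ≠ ⊤) :
    ∃ c : I, a ≤ c ∧ c ≤ b ∧
      eVariationOn f (Icc a c) ≤ eVariationOn f (Icc a b) / 2 + eVariationOn f (Icc a b) / 4 ∧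
      eVariationOn f (Icc c b) ≤ eVariationOn f (Icc a b) / 2 + eVariationOn f (Icc a b) / 4 := by
  set V := eVariationOn f (Icc a b) with hV
  by_cases hV0 : V = 0
  · refine ⟨a, le_rfl, hab, ?_, ?_⟩
    · rw [eVariationOn.subsingleton f (Set.subsingleton_Icc_of_ge le_rfl)]
      exact zero_le
    · rw [← hV, hV0]; exact zero_le
  · have hV4 : 0 < V/4 := ENNReal.div_pos hV0 (by norm_num)
    -- the set S and its sup
    set T : Set ℝ := Subtype.val '' {t : I | t ∈ Icc a b ∧ eVariationOn f (Icc a t) ≤ V/2} with hT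
    have haT : (a:ℝ) ∈ T := by
      refine ⟨a, ⟨⟨le_rfl, hab⟩, ?_⟩, rfl⟩
      rw [eVariationOn.subsingleton f (Set.subsingleton_Icc_of_ge le_rfl)]
      exact zero_le
    have hTne : T.Nonempty := ⟨a, haT⟩
    have hTbdd : BddAbove T := ⟨b, by rintro _ ⟨t, ⟨⟨_, h2⟩, _⟩, rfl⟩; exact h2⟩
    set m : ℝ := sSup T with hm
    have ham : (a:ℝ) ≤ m := le_csSup hTbdd haT
    have hmb : m ≤ b := csSup_le hTne (by rintro _ ⟨t, ⟨⟨_, h2⟩, _⟩, rfl⟩; exact h2)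
    set c : I := ⟨m, le_trans a.2.1 ham, le_trans hmb b.2.2⟩ with hc
    have hac : a ≤ c := Subtype.coe_le_coe.1 ham
    have hcb : c ≤ b := Subtype.coe_le_coe.1 hmb
    have hfinac : eVariationOn f (Icc a c) ≠ ⊤ :=
      fun h => hfin (top_le_iff.1 (h ▸ eVariationOn.mono f (Icc_subset_Icc le_rfl hcb)))
    have hfincb : eVariationOn f (Icc c b) ≠ ⊤ :=
      fun h => hfin (top_le_iff.1 (h ▸ eVariationOn.mono f (Icc_subset_Icc hac le_rfl)))
    have hsplit : eVariationOn f (Icc a c) + eVariationOn f (Icc c b) = V := by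
      have := eVariationOn.Icc_add_Icc f (s := univ) hac hcb (mem_univ c)
      simpa using this
    -- claim 1
    have claim1 : eVariationOn f (Icc a c) ≤ V/2 + V/4 := by
      rcases eq_or_lt_of_le hac with he | hlt
      · rw [← he, eVariationOn.subsingleton f (Set.subsingleton_Icc_of_ge le_rfl)]
        exact zero_le
      · obtain ⟨t, hat, htc, hvar⟩ := exists_left_small f hf hlt hfinac hV4
        obtain ⟨s', hsT, hts⟩ := exists_lt_of_lt_csSup hTne (show (t:ℝ) < m from htc)
        obtain ⟨s, ⟨⟨has, hsb⟩, hs2⟩, rfl⟩ := hsT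
        have hsc : s ≤ c := Subtype.coe_le_coe.1 (le_csSup hTbdd ⟨s, ⟨⟨has, hsb⟩, hs2⟩, rfl⟩)
        have hts' : t ≤ s := le_of_lt hts
        have hadd2 : eVariationOn f (Icc a s) + eVariationOn f (Icc s c) = eVariationOn f (Icc a c) := by
          have := eVariationOn.Icc_add_Icc f (s := univ) has hsc (mem_univ s)
          simpa using this
        rw [← hadd2]
        exact add_le_add hs2 (le_trans (eVariationOn.mono f (Icc_subset_Icc hts' le_rfl)) hvar)
    refine ⟨c, hac, hcb, claim1, ?_⟩
    -- claim 2
    rcases eq_or_lt_of_le hcb with he | hlt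
    · rw [he, eVariationOn.subsingleton f (Set.subsingleton_Icc_of_ge le_rfl)]
      exact zero_le
    · obtain ⟨d, hcd, hdb, hvar⟩ := exists_right_small f hf hlt hfincb hV4
      have hdT : (d:ℝ) ∉ T := fun h => absurd (le_csSup hTbdd h) (not_le.2 hcd)
      have hd2 : ¬ eVariationOn f (Icc a d) ≤ V/2 := fun h =>
        hdT ⟨d, ⟨⟨hac.trans hcd.le, hdb⟩, h⟩, rfl⟩
      push_neg at hd2
      have hadd3 : eVariationOn f (Icc a d) + eVariationOn f (Icc d b) = V := by
        have := eVariationOn.Icc_add_Icc f (s := univ) (hac.trans hcd.le) hdb (mem_univ d)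
        simpa using this
      have hdb2 : eVariationOn f (Icc d b) ≤ V/2 := by
        have hV2fin : (V/2 : ℝ≥0∞) ≠ ⊤ := (ENNReal.div_lt_top hfin (by norm_num)).ne
        rw [← ENNReal.add_le_add_iff_left hV2fin]
        calc V/2 + eVariationOn f (Icc d b) ≤ eVariationOn f (Icc a d) + eVariationOn f (Icc d b) :=
              add_le_add_left hd2.le _
          _ = V := hadd3
          _ = V/2 + V/2 := (ENNReal.add_halves V).symm
      have hadd4 : eVariationOn f (Icc c d) + eVariationOn f (Icc d b) = eVariationOn f (Icc c b) := by
        have := eVariationOn.Icc_add_Icc f (s := univ) hcd.le hdb (mem_univ d)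
        simpa using this
      rw [← hadd4]
      calc eVariationOn f (Icc c d) + eVariationOn f (Icc d b) ≤ V/4 + V/2 := add_le_add hvar hdb2
        _ = V/2 + V/4 := add_comm _ _

end Var

theorem pathLength_subPath_le {X : Type*} [PseudoEMetricSpace X] {x y : X} (γ : Path x y)
    {a b : I} (hab : a ≤ b) :
    pathLength (subPath γ a b) ≤ eVariationOn ⇑γ (Icc a b) := by
  rw [pathLength]
  have heq : EqOn (⇑(subPath γ a b)) (⇑γ ∘ segMap a b) univ := fun t _ => rfl
  rw [eVariationOn.eq_of_eqOn heq]
  exact eVariationOn.comp_le_of_monotoneOn _ _ (fun s _ t _ h => segMap_monotone hab h)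
    (fun t _ => segMap_mem hab t)

theorem ofReal_div_bound (r : ℝ) (hr : 0 ≤ r) :
    ENNReal.ofReal r / 2 + ENNReal.ofReal r / 4 ≤ ENNReal.ofReal (3/4 * r) := by
  rw [show ((2:ℝ≥0∞)) = ENNReal.ofReal 2 by norm_num,
    show ((4:ℝ≥0∞)) = ENNReal.ofReal 4 by norm_num,
    ← ENNReal.ofReal_div_of_pos (by norm_num), ← ENNReal.ofReal_div_of_pos (by norm_num),
    ← ENNReal.ofReal_add (by positivity) (by positivity)]
  exact ENNReal.ofReal_le_ofReal (by linarith)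

end NLFAux

open NLFAux CategoryTheory unitInterval Set Filter
open scoped ENNReal NNReal Topology

attribute [local instance] Path.Homotopic.setoid

/-- If the level set `{x | dist p x = ρ}` of the distance function from `p`
contains the image of a rectifiable noncontractible loop, then `ρ ≥ sys(X,p)/2`;
in particular `ρ ≥ sys(X)/2`. -/
theorem noncontractible_level_far_from_center {X : Type*} [MetricSpace X] [CompactSpace X]
    (hgeo : IsGeodesicSpace X) (p : X) (ρ : ℝ) (hρ : 0 < ρ)
    (x : X) (γ : Path x x) (hnc : ¬γ.Homotopic (Path.refl x))
    (hrect : pathLength γ ≠ ⊤) (hsub : Set.range ⇑γ ⊆ {y | dist p y = ρ}) :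
    pointedSystole X p / 2 ≤ ENNReal.ofReal ρ ∧ systole X / 2 ≤ ENNReal.ofReal ρ := by
  classical
  set ρ' := ENNReal.ofReal ρ with hρ'
  choose g hg using fun y => hgeo p y
  have hdist : ∀ t : I, dist p (γ t) = ρ := fun t => hsub ⟨t, rfl⟩
  have hglen : ∀ t : I, pathLength (g (γ t)) = ρ' := by
    intro t
    rw [hg, edist_dist, hdist t]
  set Λ : I → I → Path p p :=
    fun a b => (g (γ a)).trans ((subPath γ a b).trans (g (γ b)).symm) with hΛ
  -- length bound
  have hlen : ∀ a b : I, a ≤ b → pathLength (Λ a b) ≤ eVariationOn ⇑γ (Icc a b) + 2 * ρ' := by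
    intro a b hab
    calc pathLength (Λ a b)
        ≤ pathLength (g (γ a)) + (pathLength (subPath γ a b) + pathLength ((g (γ b)).symm)) :=
          le_trans (pathLength_trans_le _ _) (by gcongr; exact pathLength_trans_le _ _)
      _ ≤ ρ' + (eVariationOn ⇑γ (Icc a b) + ρ') := by
          gcongr
          · exact le_of_eq (hglen a)
          · exact pathLength_subPath_le γ hab
          · exact le_trans (pathLength_symm_le _) (le_of_eq (hglen b))
      _ = eVariationOn ⇑γ (Icc a b) + 2 * ρ' := by ring
  -- splitting of loops
  have hsplitΛ : ∀ a c b : I, a ≤ c → c ≤ b → hq (Λ a b) = hq (Λ a c) ≫ hq (Λ c b) := by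
    intro a c b hac hcb
    have hS : hq (subPath γ a c) ≫ hq (subPath γ c b) = hq (subPath γ a b) := by
      rw [← hq_trans]
      exact hq_eq_of_homotopic _ _ (subPath_trans_homotopic γ hac hcb)
    show hq ((g (γ a)).trans ((subPath γ a b).trans (g (γ b)).symm))
      = hq ((g (γ a)).trans ((subPath γ a c).trans (g (γ c)).symm))
        ≫ hq ((g (γ c)).trans ((subPath γ c b).trans (g (γ b)).symm))
    simp only [hq_trans, hq_symm, Category.assoc, ← hS]
    congr 1
    rw [← Category.assoc (Groupoid.inv (hq (g (γ c)))) (hq (g (γ c)))]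
    simp
  -- base loop is noncontractible
  have hne01 : hq (Λ 0 1) ≠ 𝟙 (FundamentalGroupoid.mk p) := by
    intro h
    apply hnc
    have h2 : hq (g (γ 0)) ≫ hq (subPath γ 0 1) ≫ Groupoid.inv (hq (g (γ 1)))
        = 𝟙 (FundamentalGroupoid.mk p) := by
      rw [← h]
      show _ = hq ((g (γ 0)).trans ((subPath γ 0 1).trans (g (γ 1)).symm))
      simp only [hq_trans, hq_symm, Category.assoc]
    have h4 : hq (g (γ 0)) ≫ hq (subPath γ 0 1) = hq (g (γ 1)) := by
      have h3 := congrArg (fun m => m ≫ hq (g (γ 1))) h2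
      simpa using h3
    have hγeq : hq γ = eqToHom (congrArg FundamentalGroupoid.mk γ.source.symm)
        ≫ hq (subPath γ 0 1) ≫ eqToHom (congrArg FundamentalGroupoid.mk γ.target) := by
      refine hq_eqToHom _ _ ?_ γ.source.symm γ.target
      intro t
      show γ t = γ (segMap 0 1 t)
      congr 1
      apply Subtype.ext
      show (t : ℝ) = (1 - t.1) * ((0:I):ℝ) + t.1 * ((1:I):ℝ)
      simp
    have hS01 : hq (subPath γ 0 1) = Groupoid.inv (hq (g (γ 0))) ≫ hq (g (γ 1)) := by
      rw [← h4]
      simp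
    have hA0 : hq (g (γ 0)) ≫ eqToHom (congrArg FundamentalGroupoid.mk γ.source) = hq (g x) :=
      hq_comp_eqToHom g γ.source
    have hA1 : hq (g (γ 1)) ≫ eqToHom (congrArg FundamentalGroupoid.mk γ.target) = hq (g x) :=
      hq_comp_eqToHom g γ.target
    have hfinal : hq γ = 𝟙 (FundamentalGroupoid.mk x) := by
      rw [hγeq, hS01]
      rw [Category.assoc, hA1, ← hA0]
      simp
    exact homotopic_of_hq_eq _ _ (hfinal.trans (hq_refl x).symm)
  -- main induction
  have hmain : ∀ n : ℕ, ∃ a b : I, a ≤ b ∧ hq (Λ a b) ≠ 𝟙 (FundamentalGroupoid.mk p) ∧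
      eVariationOn ⇑γ (Icc a b) ≤ ENNReal.ofReal ((3/4)^n * (pathLength γ).toReal) := by
    intro n
    induction n with
    | zero =>
      refine ⟨0, 1, Subtype.coe_le_coe.1 (by norm_num), hne01, ?_⟩
      rw [pow_zero, one_mul, Icc_zero_one, ENNReal.ofReal_toReal hrect]
      exact le_rfl
    | succ n ih =>
      obtain ⟨a, b, hab, hne, hbd⟩ := ih
      have hfinab : eVariationOn ⇑γ (Icc a b) ≠ ⊤ := by
        intro htop
        apply hrect
        apply top_le_iff.1
        rw [← htop]
        exact eVariationOn.mono _ (subset_univ _)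
      obtain ⟨c, hac, hcb, h1, h2⟩ := exists_good_split ⇑γ γ.continuous_toFun hab hfinab
      have hbound : ∀ s : Set I,
          eVariationOn ⇑γ s ≤ eVariationOn ⇑γ (Icc a b)/2 + eVariationOn ⇑γ (Icc a b)/4 →
          eVariationOn ⇑γ s ≤ ENNReal.ofReal ((3/4)^(n+1) * (pathLength γ).toReal) := by
        intro s hs
        calc eVariationOn ⇑γ s
            ≤ eVariationOn ⇑γ (Icc a b)/2 + eVariationOn ⇑γ (Icc a b)/4 := hs
          _ ≤ ENNReal.ofReal ((3/4)^n * (pathLength γ).toReal)/2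
              + ENNReal.ofReal ((3/4)^n * (pathLength γ).toReal)/4 := by gcongr
          _ ≤ ENNReal.ofReal (3/4 * ((3/4)^n * (pathLength γ).toReal)) :=
              ofReal_div_bound _ (by positivity)
          _ = ENNReal.ofReal ((3/4)^(n+1) * (pathLength γ).toReal) := by
              congr 1
              rw [pow_succ]
              ring
      by_cases hc1 : hq (Λ a c) = 𝟙 (FundamentalGroupoid.mk p)
      · refine ⟨c, b, hcb, ?_, hbound _ h2⟩
        intro hc2
        apply hne
        rw [hsplitΛ a c b hac hcb, hc1, hc2, Category.comp_id]
      · exact ⟨a, c, hac, hc1, hbound _ h1⟩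
  -- conclusion
  have hkey : pointedSystole X p ≤ 2 * ρ' := by
    have hstep : ∀ n : ℕ,
        pointedSystole X p ≤ ENNReal.ofReal ((3/4)^n * (pathLength γ).toReal) + 2 * ρ' := by
      intro n
      obtain ⟨a, b, hab, hne, hbd⟩ := hmain n
      have hmem : pathLength (Λ a b)
          ∈ {L | ∃ δ : Path p p, ¬δ.Homotopic (Path.refl p) ∧ pathLength δ = L} := by
        refine ⟨Λ a b, ?_, rfl⟩
        intro hcon
        exact hne ((hq_eq_of_homotopic _ _ hcon).trans (hq_refl p))
      calc pointedSystole X p ≤ pathLength (Λ a b) := sInf_le hmem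
        _ ≤ eVariationOn ⇑γ (Icc a b) + 2 * ρ' := hlen a b hab
        _ ≤ _ := by gcongr
    have htt : Tendsto (fun n : ℕ => ENNReal.ofReal ((3/4)^n * (pathLength γ).toReal) + 2 * ρ')
        atTop (𝓝 (ENNReal.ofReal 0 + 2 * ρ')) := by
      apply Filter.Tendsto.add _ tendsto_const_nhds
      apply ENNReal.tendsto_ofReal
      have h5 := (tendsto_pow_atTop_nhds_zero_of_lt_one (show (0:ℝ) ≤ 3/4 by norm_num)
        (by norm_num)).mul_const ((pathLength γ).toReal)
      simpa using h5
    have := ge_of_tendsto' htt hstep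
    simpa using this
  have hhalf : pointedSystole X p / 2 ≤ ρ' := by
    rw [ENNReal.div_le_iff_le_mul (Or.inl (by norm_num)) (Or.inl (by norm_num))]
    calc pointedSystole X p ≤ 2 * ρ' := hkey
      _ = ρ' * 2 := mul_comm _ _
  have hmono : systole X ≤ pointedSystole X p := by
    apply sInf_le_sInf
    rintro L ⟨δ, h1, h2⟩
    exact ⟨p, δ, h1, h2⟩
  exact ⟨hhalf, le_trans (by gcongr) hhalf⟩
end
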